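/- arXiv:1011.4186 — 5 statements merged into one kernel-verified Lean document; each statement's English description precedes it below -/
import Mathlib

section
/- Let K be a field, let P ∈ K[X,Y] be a homogeneous polynomial of degree d ≥ 1, and let I = (Z^d − P(X,Y)) ⊆ K[X,Y,Z]. Fix positive integers a₁, a₂, a₃ and write a₃ = dk + t with 0 ≤ t < d. Then for every integer m and all homogeneous polynomials F, G, H ∈ K[X,Y,Z] of degrees m−a₁, m−a₂, m−a₃ respectively satisfying F·X^{a₁} + G·Y^{a₂} + H·Z^{a₃} ∈ I, there exist homogeneous polynomials f₁, f₂, f₃ ∈ K[X,Y,Z] of degrees m−t−a₁, m−t−a₂, m−t−dk with f₁·X^{a₁} + f₂·Y^{a₂} + f₃·P^k ∈ I, and homogeneous polynomials g₁, g₂, g₃ ∈ K[X,Y,Z] of degrees m−a₁, m−a₂, m−d(k+1) with g₁·X^{a₁} + g₂·Y^{a₂} + g₃·P^{k+1} ∈ I, such that F − (Z^t·f₁ + g₁) ∈ I, G − (Z^t·f₂ + g₂) ∈ I, and H − (f₃ + Z^{d−t}·g₃) ∈ I. -/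
open MvPolynomial

/-- A multivariate polynomial is homogeneous of *integer* degree `n`: either it is the zero
polynomial (which is regarded as homogeneous of every degree), or `n` is a natural number
and the polynomial is homogeneous of that degree. -/
def HomogInt {K : Type*} [Field K] {σ : Type*} (F : MvPolynomial σ K) (n : ℤ) : Prop :=
  F = 0 ∨ ∃ m : ℕ, (m : ℤ) = n ∧ F.IsHomogeneous m

theorem homogComp_mul {K : Type*} [Field K] {σ : Type*} {w : MvPolynomial σ K} {e : ℕ}
    (hw : w.IsHomogeneous e) (c : MvPolynomial σ K) (n : ℕ) :
    homogeneousComponent n (c * w) =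
      if e ≤ n then homogeneousComponent (n - e) c * w else 0 := by
  classical
  conv_lhs => rw [← sum_homogeneousComponent c, Finset.sum_mul, map_sum]
  have h1 : ∀ i ∈ Finset.range (c.totalDegree + 1),
      homogeneousComponent n (homogeneousComponent i c * w)
        = if i = n - e ∧ e ≤ n then homogeneousComponent i c * w else 0 := by
    intro i _
    rw [homogeneousComponent_of_mem ((mem_homogeneousSubmodule _ _).2
      ((homogeneousComponent_isHomogeneous i c).mul hw))]
    congr 1
    have : (n = i + e) = (i = n - e ∧ e ≤ n) := by
      apply propext; constructor
      · intro h; omega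
      · intro h; omega
    rw [this]
  rw [Finset.sum_congr rfl h1]
  by_cases he : e ≤ n
  · rw [if_pos he]
    simp only [he, and_true]
    rw [Finset.sum_ite_eq' (Finset.range (c.totalDegree + 1)) (n - e)
      (fun i => homogeneousComponent i c * w)]
    by_cases hmem2 : n - e ∈ Finset.range (c.totalDegree + 1)
    · rw [if_pos hmem2]
    · rw [if_neg hmem2, homogeneousComponent_eq_zero, zero_mul]
      simp only [Finset.mem_range] at hmem2
      omega
  · simp only [he, and_false, if_false, Finset.sum_const_zero, if_neg he]

noncomputable def zComp {K : Type*} [Field K] {σ : Type*} (c : MvPolynomial σ K) (n : ℤ) :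
    MvPolynomial σ K :=
  if 0 ≤ n then homogeneousComponent n.toNat c else 0

theorem zComp_add {K : Type*} [Field K] {σ : Type*} (a b : MvPolynomial σ K) (n : ℤ) :
    zComp (a + b) n = zComp a n + zComp b n := by
  unfold zComp; split <;> simp

theorem zComp_sub {K : Type*} [Field K] {σ : Type*} (a b : MvPolynomial σ K) (n : ℤ) :
    zComp (a - b) n = zComp a n - zComp b n := by
  unfold zComp; split <;> simp

theorem zComp_homogInt {K : Type*} [Field K] {σ : Type*} (c : MvPolynomial σ K) (n : ℤ) :
    HomogInt (zComp c n) n := by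
  unfold zComp; split
  · exact Or.inr ⟨n.toNat, by omega, homogeneousComponent_isHomogeneous _ _⟩
  · exact Or.inl rfl

theorem zComp_mul {K : Type*} [Field K] {σ : Type*} {w : MvPolynomial σ K} {e : ℕ}
    (hw : w.IsHomogeneous e) (c : MvPolynomial σ K) (n : ℤ) :
    zComp (c * w) n = zComp c (n - e) * w := by
  unfold zComp
  by_cases h2 : 0 ≤ n - (e : ℤ)
  · rw [if_pos (by omega), if_pos h2, homogComp_mul hw, if_pos (by omega)]
    have h3 : n.toNat - e = (n - (e : ℤ)).toNat := by omega
    rw [h3]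
  · by_cases h1 : 0 ≤ n
    · rw [if_pos h1, if_neg h2, homogComp_mul hw, if_neg (by omega), zero_mul]
    · rw [if_neg h1, if_neg h2, zero_mul]

theorem zComp_eq_self {K : Type*} [Field K] {σ : Type*} {c : MvPolynomial σ K} {n : ℤ}
    (h : HomogInt c n) : zComp c n = c := by
  rcases h with rfl | ⟨N, hN, hhom⟩
  · unfold zComp; split <;> simp
  · unfold zComp
    rw [if_pos (by omega)]
    have h2 : n.toNat = N := by omega
    rw [h2, homogeneousComponent_of_mem ((mem_homogeneousSubmodule _ _).2 hhom), if_pos rfl]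

theorem zComp_mem {K : Type*} [Field K] {σ : Type*} {w : MvPolynomial σ K} {e : ℕ}
    (hw : w.IsHomogeneous e) {c : MvPolynomial σ K}
    (hc : c ∈ Ideal.span {w}) (n : ℤ) : zComp c n ∈ Ideal.span {w} := by
  obtain ⟨x, hx⟩ := Ideal.mem_span_singleton.1 hc
  rw [hx, mul_comm, zComp_mul hw]
  exact Ideal.mul_mem_left _ _ (Ideal.subset_span rfl)

noncomputable def phi3 (K : Type*) [Field K] :
    MvPolynomial (Fin 3) K ≃ₐ[K] Polynomial (MvPolynomial (Fin 2) K) :=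
  (renameEquiv K (finRotate 3)).trans (finSuccEquiv K 2)

theorem phi3_X0 {K : Type*} [Field K] : phi3 K (X 0) = Polynomial.C (X 0) := by
  have h : finRotate 3 (0 : Fin 3) = Fin.succ (0 : Fin 2) := by decide
  simp only [phi3, AlgEquiv.trans_apply, renameEquiv_apply, rename_X]
  rw [h, finSuccEquiv_X_succ]

theorem phi3_X1 {K : Type*} [Field K] : phi3 K (X 1) = Polynomial.C (X 1) := by
  have h : finRotate 3 (1 : Fin 3) = Fin.succ (1 : Fin 2) := by decide
  simp only [phi3, AlgEquiv.trans_apply, renameEquiv_apply, rename_X]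
  rw [h, finSuccEquiv_X_succ]

theorem phi3_X2 {K : Type*} [Field K] : phi3 K (X 2) = Polynomial.X := by
  have h : finRotate 3 (2 : Fin 3) = (0 : Fin 3) := by decide
  simp only [phi3, AlgEquiv.trans_apply, renameEquiv_apply, rename_X]
  rw [h, finSuccEquiv_X_zero]

theorem phi3_Q {K : Type*} [Field K] (P : MvPolynomial (Fin 2) K) :
    phi3 K (rename Fin.castSucc P) = Polynomial.C P := by
  induction P using MvPolynomial.induction_on with
  | C a =>
      rw [rename_C]
      simp [phi3, Polynomial.algebraMap_apply, algebraMap_eq, finSuccEquiv_apply]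
  | add p q hp hq => rw [map_add, map_add, hp, hq, map_add]
  | mul_X p i hp =>
      have h : finRotate 3 (Fin.castSucc i) = Fin.succ i := by fin_cases i <;> decide
      have hXi : phi3 K (X (Fin.castSucc i)) = Polynomial.C (X i) := by
        simp only [phi3, AlgEquiv.trans_apply, renameEquiv_apply, rename_X]
        rw [h, finSuccEquiv_X_succ]
      rw [map_mul, map_mul, hp, rename_X, hXi, map_mul]

set_option maxHeartbeats 1000000 in
/-- Every homogeneous syzygy of `(X^{a₁}, Y^{a₂}, Z^{a₃})` modulo `(Z^d - P(X,Y))` comes from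
syzygies of `(X^{a₁}, Y^{a₂}, P^k)` and of `(X^{a₁}, Y^{a₂}, P^{k+1})` (Lemma 2.1). -/
theorem splitting_lemma (K : Type*) [Field K] (d : ℕ) (hd : 1 ≤ d)
    (P : MvPolynomial (Fin 2) K) (hP : P.IsHomogeneous d)
    (a₁ a₂ a₃ k t : ℕ) (ha₁ : 0 < a₁) (ha₂ : 0 < a₂) (ha₃ : 0 < a₃)
    (hkt : a₃ = d * k + t) (ht : t < d)
    (Q : MvPolynomial (Fin 3) K) (hQ : Q = rename Fin.castSucc P)
    (I : Ideal (MvPolynomial (Fin 3) K)) (hI : I = Ideal.span {X 2 ^ d - Q})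
    (m : ℤ) (F G H : MvPolynomial (Fin 3) K)
    (hF : HomogInt F (m - a₁)) (hG : HomogInt G (m - a₂)) (hH : HomogInt H (m - a₃))
    (hsyz : F * X 0 ^ a₁ + G * X 1 ^ a₂ + H * X 2 ^ a₃ ∈ I) :
    ∃ f₁ f₂ f₃ g₁ g₂ g₃ : MvPolynomial (Fin 3) K,
      HomogInt f₁ (m - t - a₁) ∧ HomogInt f₂ (m - t - a₂) ∧
      HomogInt f₃ (m - t - d * k) ∧
      f₁ * X 0 ^ a₁ + f₂ * X 1 ^ a₂ + f₃ * Q ^ k ∈ I ∧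
      HomogInt g₁ (m - a₁) ∧ HomogInt g₂ (m - a₂) ∧
      HomogInt g₃ (m - d * (k + 1)) ∧
      g₁ * X 0 ^ a₁ + g₂ * X 1 ^ a₂ + g₃ * Q ^ (k + 1) ∈ I ∧
      F - (X 2 ^ t * f₁ + g₁) ∈ I ∧
      G - (X 2 ^ t * f₂ + g₂) ∈ I ∧
      H - (f₃ + X 2 ^ (d - t) * g₃) ∈ I := by
  classical
  subst hQ hI
  set φ := phi3 K with hφdef
  set w : MvPolynomial (Fin 3) K := X 2 ^ d - rename Fin.castSucc P with hwdef
  set p : Polynomial (MvPolynomial (Fin 2) K) := Polynomial.X ^ d - Polynomial.C P with hpdef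
  have hφw : φ w = p := by
    rw [hwdef, map_sub, map_pow, phi3_X2, phi3_Q]
  have hmemI : ∀ x : MvPolynomial (Fin 3) K, x ∈ Ideal.span {w} ↔ p ∣ φ x := by
    intro x
    rw [Ideal.mem_span_singleton]
    constructor
    · intro h; exact hφw ▸ map_dvd φ h
    · intro h
      have h2 := map_dvd φ.symm h
      rw [← hφw, AlgEquiv.symm_apply_apply, AlgEquiv.symm_apply_apply] at h2
      exact h2
  have hpm : p.Monic := Polynomial.monic_X_pow_sub_C P (by omega)
  have hpdeg : p.degree = (d : ℕ) := by
    rw [hpdef]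
    rw [Polynomial.degree_sub_eq_left_of_degree_lt, Polynomial.degree_X_pow]
    rw [Polynomial.degree_X_pow]
    refine lt_of_le_of_lt Polynomial.degree_C_le ?_
    exact_mod_cast hd
  -- abbreviations
  set F' := φ F %ₘ p with hF'def
  set G' := φ G %ₘ p with hG'def
  set H' := φ H %ₘ p with hH'def
  set f₁' := F' /ₘ Polynomial.X ^ t with hf₁def
  set g₁' := F' %ₘ Polynomial.X ^ t with hg₁def
  set f₂' := G' /ₘ Polynomial.X ^ t with hf₂def
  set g₂' := G' %ₘ Polynomial.X ^ t with hg₂def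
  set f₃' := H' %ₘ Polynomial.X ^ (d - t) with hf₃def
  set g₃' := H' /ₘ Polynomial.X ^ (d - t) with hg₃def
  set u := Polynomial.C (X (0 : Fin 2) : MvPolynomial (Fin 2) K) ^ a₁ with hudef
  set v := Polynomial.C (X (1 : Fin 2) : MvPolynomial (Fin 2) K) ^ a₂ with hvdef
  set c := Polynomial.C P with hcdef
  set A' := f₁' * u + f₂' * v + f₃' * c ^ k with hA'def
  set B' := g₁' * u + g₂' * v + g₃' * c ^ (k + 1) with hB'def
  have hsplitF : g₁' + Polynomial.X ^ t * f₁' = F' :=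
    Polynomial.modByMonic_add_div F' (Polynomial.X ^ t)
  have hsplitG : g₂' + Polynomial.X ^ t * f₂' = G' :=
    Polynomial.modByMonic_add_div G' (Polynomial.X ^ t)
  have hsplitH : f₃' + Polynomial.X ^ (d - t) * g₃' = H' :=
    Polynomial.modByMonic_add_div H' (Polynomial.X ^ (d - t))
  have hred : ∀ x : Polynomial (MvPolynomial (Fin 2) K), p ∣ x - x %ₘ p := by
    intro x
    exact ⟨x /ₘ p, by linear_combination -(Polynomial.modByMonic_add_div x p)⟩
  have hdvdS : p ∣ φ F * u + φ G * v + φ H * Polynomial.X ^ a₃ := by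
    have h := (hmemI _).1 hsyz
    rwa [map_add, map_add, map_mul, map_mul, map_mul, map_pow, map_pow, map_pow,
      phi3_X0, phi3_X1, phi3_X2] at h
  have hdvdX : p ∣ Polynomial.X ^ a₃ - Polynomial.X ^ t * c ^ k := by
    obtain ⟨r, hr⟩ := sub_dvd_pow_sub_pow ((Polynomial.X :
      Polynomial (MvPolynomial (Fin 2) K)) ^ d) c k
    have hx : (Polynomial.X : Polynomial (MvPolynomial (Fin 2) K)) ^ a₃
        = (Polynomial.X ^ d) ^ k * Polynomial.X ^ t := by
      rw [hkt, pow_add, pow_mul]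
    refine ⟨Polynomial.X ^ t * r, ?_⟩
    rw [hx]
    linear_combination (Polynomial.X ^ t : Polynomial (MvPolynomial (Fin 2) K)) * hr
      + ((Polynomial.X : Polynomial (MvPolynomial (Fin 2) K)) ^ t * r) * hpdef
  have hdvdW : p ∣ F' * u + G' * v + H' * (Polynomial.X ^ t * c ^ k) := by
    obtain ⟨cS, hcS⟩ := hdvdS
    obtain ⟨cF, hcF⟩ := hred (φ F)
    obtain ⟨cG, hcG⟩ := hred (φ G)
    obtain ⟨cH, hcH⟩ := hred (φ H)
    obtain ⟨cX, hcX⟩ := hdvdX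
    refine ⟨cS - cF * u - cG * v - cH * Polynomial.X ^ a₃ - H' * cX, ?_⟩
    linear_combination hcS - u * hcF - v * hcG - (Polynomial.X ^ a₃ :
      Polynomial (MvPolynomial (Fin 2) K)) * hcH - H' * hcX
  have hXdt : (Polynomial.X : Polynomial (MvPolynomial (Fin 2) K)) ^ t
      * Polynomial.X ^ (d - t) = Polynomial.X ^ d := by
    rw [← pow_add]
    congr 1
    omega
  have hdvdAB : p ∣ Polynomial.X ^ t * A' + B' := by
    obtain ⟨cW, hcW⟩ := hdvdW
    refine ⟨cW - g₃' * c ^ k, ?_⟩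
    linear_combination u * hsplitF + v * hsplitG
      + ((Polynomial.X : Polynomial (MvPolynomial (Fin 2) K)) ^ t * c ^ k) * hsplitH
      + hcW + (g₃' * c ^ k) * hpdef - (g₃' * c ^ k) * hXdt
  -- degree bounds
  have hu0 : u.degree ≤ 0 := by rw [hudef, ← map_pow]; exact Polynomial.degree_C_le
  have hv0 : v.degree ≤ 0 := by rw [hvdef, ← map_pow]; exact Polynomial.degree_C_le
  have hck : (c ^ k).degree ≤ 0 := by rw [hcdef, ← map_pow]; exact Polynomial.degree_C_le
  have hck1 : (c ^ (k + 1)).degree ≤ 0 := by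
    rw [hcdef, ← map_pow]; exact Polynomial.degree_C_le
  have mulb : ∀ (x y : Polynomial (MvPolynomial (Fin 2) K)) (b : WithBot ℕ),
      x.degree < b → y.degree ≤ 0 → (x * y).degree < b := by
    intro x y b hx hy
    refine (Polynomial.degree_mul_le x y).trans_lt ?_
    have h2 := add_le_add (le_refl x.degree) hy
    rw [add_zero] at h2
    exact h2.trans_lt hx
  have hdF : F'.degree < (d : ℕ) := hpdeg ▸ Polynomial.degree_modByMonic_lt _ hpm
  have hdG : G'.degree < (d : ℕ) := hpdeg ▸ Polynomial.degree_modByMonic_lt _ hpm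
  have hdH : H'.degree < (d : ℕ) := hpdeg ▸ Polynomial.degree_modByMonic_lt _ hpm
  have hdg₁ : g₁'.degree < (t : ℕ) := by
    have h := Polynomial.degree_modByMonic_lt F' (Polynomial.monic_X_pow t)
    rwa [Polynomial.degree_X_pow] at h
  have hdg₂ : g₂'.degree < (t : ℕ) := by
    have h := Polynomial.degree_modByMonic_lt G' (Polynomial.monic_X_pow t)
    rwa [Polynomial.degree_X_pow] at h
  have hdf₃ : f₃'.degree < ((d - t : ℕ) : WithBot ℕ) := by
    have h := Polynomial.degree_modByMonic_lt H' (Polynomial.monic_X_pow (d - t))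
    rwa [Polynomial.degree_X_pow] at h
  have hdivb : ∀ (x y : Polynomial (MvPolynomial (Fin 2) K)) (s b : ℕ),
      x.degree < (d : ℕ) → y = x /ₘ Polynomial.X ^ s → s + b = d → s < d →
      y.degree < (b : WithBot ℕ) := by
    intro x y s b hx hy hsb hs
    rcases eq_or_ne y 0 with h0 | h0
    · rw [h0, Polynomial.degree_zero]
      exact WithBot.bot_lt_coe b
    · have hx0 : x ≠ 0 := by
        intro hx0
        rw [hx0, Polynomial.zero_divByMonic] at hy
        exact h0 hy
      have h1 : x.natDegree < d := (Polynomial.natDegree_lt_iff_degree_lt hx0).2 hx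
      have h2 : y.natDegree = x.natDegree - s := by
        rw [hy, Polynomial.natDegree_divByMonic x (Polynomial.monic_X_pow s),
          Polynomial.natDegree_X_pow]
      have h3 : y.natDegree < b := by omega
      exact (Polynomial.natDegree_lt_iff_degree_lt h0).1 h3
  have hdf₁ : f₁'.degree < ((d - t : ℕ) : WithBot ℕ) :=
    hdivb F' f₁' t (d - t) hdF hf₁def (by omega) (by omega)
  have hdf₂ : f₂'.degree < ((d - t : ℕ) : WithBot ℕ) :=
    hdivb G' f₂' t (d - t) hdG hf₂def (by omega) (by omega)
  have hdg₃ : g₃'.degree < (t : ℕ) := by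
    rcases Nat.eq_zero_or_pos t with ht0 | ht0
    · have h0 : g₃' = 0 := by
        rw [hg₃def, Polynomial.divByMonic_eq_zero_iff (Polynomial.monic_X_pow (d - t)),
          Polynomial.degree_X_pow]
        rw [ht0, Nat.sub_zero]
        exact hdH
      rw [h0, Polynomial.degree_zero]
      exact WithBot.bot_lt_coe t
    · exact hdivb H' g₃' (d - t) t hdH hg₃def (by omega) (by omega)
  have hdegA : A'.degree < ((d - t : ℕ) : WithBot ℕ) := by
    rw [hA'def]
    refine (Polynomial.degree_add_le _ _).trans_lt (max_lt ?_ (mulb _ _ _ hdf₃ hck))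
    exact (Polynomial.degree_add_le _ _).trans_lt
      (max_lt (mulb _ _ _ hdf₁ hu0) (mulb _ _ _ hdf₂ hv0))
  have hdegB : B'.degree < ((t : ℕ) : WithBot ℕ) := by
    rw [hB'def]
    refine (Polynomial.degree_add_le _ _).trans_lt (max_lt ?_ (mulb _ _ _ hdg₃ hck1))
    exact (Polynomial.degree_add_le _ _).trans_lt
      (max_lt (mulb _ _ _ hdg₁ hu0) (mulb _ _ _ hdg₂ hv0))
  have hzero : Polynomial.X ^ t * A' + B' = 0 := by
    refine Polynomial.eq_zero_of_dvd_of_degree_lt hdvdAB ?_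
    rw [hpdeg]
    refine (Polynomial.degree_add_le _ _).trans_lt (max_lt ?_ ?_)
    · refine (Polynomial.degree_mul_le _ _).trans_lt ?_
      rw [Polynomial.degree_X_pow]
      calc ((t : ℕ) : WithBot ℕ) + A'.degree
          < ((t : ℕ) : WithBot ℕ) + ((d - t : ℕ) : WithBot ℕ) := by
            exact WithBot.add_lt_add_left WithBot.coe_ne_bot hdegA
        _ = ((d : ℕ) : WithBot ℕ) := by
            have hnat : t + (d - t) = d := by omega
            rw [← Nat.cast_add, hnat]
    · exact hdegB.trans_le (by exact_mod_cast Nat.le_of_lt ht)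
  have hA0 : A' = 0 := by
    by_contra hA0
    have h1 : (Polynomial.X ^ t * A').degree = ((t : ℕ) : WithBot ℕ) + A'.degree := by
      rw [Polynomial.degree_mul, Polynomial.degree_X_pow]
    have h2 : B' = -(Polynomial.X ^ t * A') := eq_neg_of_add_eq_zero_right hzero
    have h3 : ((t : ℕ) : WithBot ℕ) ≤ (Polynomial.X ^ t * A').degree := by
      rw [h1]
      have h4 : (0 : WithBot ℕ) ≤ A'.degree := Polynomial.zero_le_degree_iff.2 hA0
      calc ((t : ℕ) : WithBot ℕ) = ((t : ℕ) : WithBot ℕ) + 0 := (add_zero _).symm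
        _ ≤ ((t : ℕ) : WithBot ℕ) + A'.degree := add_le_add le_rfl h4
    rw [h2, Polynomial.degree_neg] at hdegB
    exact absurd hdegB (not_lt.2 h3)
  have hB0 : B' = 0 := by rwa [hA0, mul_zero, zero_add] at hzero
  -- raw witnesses
  have hwhom : w.IsHomogeneous d := by
    have h1 := isHomogeneous_X_pow (R := K) (2 : Fin 3) d
    have h2 : (rename (Fin.castSucc) P).IsHomogeneous d := hP.rename_isHomogeneous
    rw [hwdef, ← mem_homogeneousSubmodule] at *
    exact Submodule.sub_mem _ h1 h2
  have hmA : φ.symm f₁' * X 0 ^ a₁ + φ.symm f₂' * X 1 ^ a₂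
      + φ.symm f₃' * (rename Fin.castSucc P) ^ k ∈ Ideal.span {w} := by
    rw [hmemI]
    have he : φ (φ.symm f₁' * X 0 ^ a₁ + φ.symm f₂' * X 1 ^ a₂
        + φ.symm f₃' * (rename Fin.castSucc P) ^ k) = A' := by
      rw [map_add, map_add, map_mul, map_mul, map_mul, map_pow, map_pow, map_pow,
        AlgEquiv.apply_symm_apply, AlgEquiv.apply_symm_apply, AlgEquiv.apply_symm_apply,
        phi3_X0, phi3_X1, phi3_Q]
    rw [he, hA0]
    exact dvd_zero p
  have hmB : φ.symm g₁' * X 0 ^ a₁ + φ.symm g₂' * X 1 ^ a₂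
      + φ.symm g₃' * (rename Fin.castSucc P) ^ (k + 1) ∈ Ideal.span {w} := by
    rw [hmemI]
    have he : φ (φ.symm g₁' * X 0 ^ a₁ + φ.symm g₂' * X 1 ^ a₂
        + φ.symm g₃' * (rename Fin.castSucc P) ^ (k + 1)) = B' := by
      rw [map_add, map_add, map_mul, map_mul, map_mul, map_pow, map_pow, map_pow,
        AlgEquiv.apply_symm_apply, AlgEquiv.apply_symm_apply, AlgEquiv.apply_symm_apply,
        phi3_X0, phi3_X1, phi3_Q]
    rw [he, hB0]
    exact dvd_zero p
  have hmF : F - (X 2 ^ t * φ.symm f₁' + φ.symm g₁') ∈ Ideal.span {w} := by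
    rw [hmemI, map_sub, map_add, map_mul, map_pow, phi3_X2,
      AlgEquiv.apply_symm_apply, AlgEquiv.apply_symm_apply]
    have he : φ F - (Polynomial.X ^ t * f₁' + g₁') = φ F - F' := by
      rw [← hsplitF]; ring
    rw [he]
    exact hred (φ F)
  have hmG : G - (X 2 ^ t * φ.symm f₂' + φ.symm g₂') ∈ Ideal.span {w} := by
    rw [hmemI, map_sub, map_add, map_mul, map_pow, phi3_X2,
      AlgEquiv.apply_symm_apply, AlgEquiv.apply_symm_apply]
    have he : φ G - (Polynomial.X ^ t * f₂' + g₂') = φ G - G' := by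
      rw [← hsplitG]; ring
    rw [he]
    exact hred (φ G)
  have hmH : H - (φ.symm f₃' + X 2 ^ (d - t) * φ.symm g₃') ∈ Ideal.span {w} := by
    rw [hmemI, map_sub, map_add, map_mul, map_pow, phi3_X2,
      AlgEquiv.apply_symm_apply, AlgEquiv.apply_symm_apply]
    have he : φ H - (f₃' + Polynomial.X ^ (d - t) * g₃') = φ H - H' := by
      rw [← hsplitH]
    rw [he]
    exact hred (φ H)
  -- homogenization
  have ha₃Z : (a₃ : ℤ) = (d : ℤ) * k + t := by exact_mod_cast hkt
  have hdtZ : ((d - t : ℕ) : ℤ) = (d : ℤ) - t := by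
    rw [Nat.cast_sub ht.le]
  refine ⟨zComp (φ.symm f₁') (m - t - a₁), zComp (φ.symm f₂') (m - t - a₂),
    zComp (φ.symm f₃') (m - t - d * k), zComp (φ.symm g₁') (m - a₁),
    zComp (φ.symm g₂') (m - a₂), zComp (φ.symm g₃') (m - d * (k + 1)),
    zComp_homogInt _ _, zComp_homogInt _ _, zComp_homogInt _ _, ?_,
    zComp_homogInt _ _, zComp_homogInt _ _, zComp_homogInt _ _, ?_, ?_, ?_, ?_⟩
  · have e1 : zComp (φ.symm f₁') (m - t - a₁) * X 0 ^ a₁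
        + zComp (φ.symm f₂') (m - t - a₂) * X 1 ^ a₂
        + zComp (φ.symm f₃') (m - t - d * k) * (rename Fin.castSucc P) ^ k
        = zComp (φ.symm f₁' * X 0 ^ a₁ + φ.symm f₂' * X 1 ^ a₂
            + φ.symm f₃' * (rename Fin.castSucc P) ^ k) (m - t) := by
      rw [zComp_add, zComp_add, zComp_mul (isHomogeneous_X_pow _ _),
        zComp_mul (isHomogeneous_X_pow _ _), zComp_mul (hP.rename_isHomogeneous.pow k)]
      have harg : m - (t : ℤ) - ((d * k : ℕ) : ℤ) = m - t - (d : ℤ) * k := by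
        push_cast; ring
      rw [harg]
    rw [e1]
    exact zComp_mem hwhom hmA _
  · have e2 : zComp (φ.symm g₁') (m - a₁) * X 0 ^ a₁
        + zComp (φ.symm g₂') (m - a₂) * X 1 ^ a₂
        + zComp (φ.symm g₃') (m - d * (k + 1)) * (rename Fin.castSucc P) ^ (k + 1)
        = zComp (φ.symm g₁' * X 0 ^ a₁ + φ.symm g₂' * X 1 ^ a₂
            + φ.symm g₃' * (rename Fin.castSucc P) ^ (k + 1)) m := by
      rw [zComp_add, zComp_add, zComp_mul (isHomogeneous_X_pow _ _),
        zComp_mul (isHomogeneous_X_pow _ _),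
        zComp_mul (hP.rename_isHomogeneous.pow (k + 1))]
      have harg : m - ((d * (k + 1) : ℕ) : ℤ) = m - (d : ℤ) * ((k : ℤ) + 1) := by
        push_cast; ring
      rw [harg]
    rw [e2]
    exact zComp_mem hwhom hmB _
  · have e3 : F - (X 2 ^ t * zComp (φ.symm f₁') (m - t - a₁) + zComp (φ.symm g₁') (m - a₁))
        = zComp (F - (X 2 ^ t * φ.symm f₁' + φ.symm g₁')) (m - a₁) := by
      rw [zComp_sub, zComp_add, zComp_eq_self hF, mul_comm (X 2 ^ t) (φ.symm f₁'),
        zComp_mul (isHomogeneous_X_pow _ _), sub_right_comm]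
      ring
    rw [e3]
    exact zComp_mem hwhom hmF _
  · have e4 : G - (X 2 ^ t * zComp (φ.symm f₂') (m - t - a₂) + zComp (φ.symm g₂') (m - a₂))
        = zComp (G - (X 2 ^ t * φ.symm f₂' + φ.symm g₂')) (m - a₂) := by
      rw [zComp_sub, zComp_add, zComp_eq_self hG, mul_comm (X 2 ^ t) (φ.symm f₂'),
        zComp_mul (isHomogeneous_X_pow _ _), sub_right_comm]
      ring
    rw [e4]
    exact zComp_mem hwhom hmG _
  · have e5 : H - (zComp (φ.symm f₃') (m - t - d * k)
        + X 2 ^ (d - t) * zComp (φ.symm g₃') (m - d * (k + 1)))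
        = zComp (H - (φ.symm f₃' + X 2 ^ (d - t) * φ.symm g₃')) (m - a₃) := by
      have harg1 : m - (a₃ : ℤ) = m - t - (d : ℤ) * k := by rw [ha₃Z]; ring
      have harg2 : m - (a₃ : ℤ) - ((d - t : ℕ) : ℤ) = m - (d : ℤ) * ((k : ℤ) + 1) := by
        rw [ha₃Z, hdtZ]; ring
      rw [zComp_sub, zComp_add, zComp_eq_self hH, mul_comm (X 2 ^ (d - t)) (φ.symm g₃'),
        zComp_mul (isHomogeneous_X_pow _ _), harg2, harg1]
      ring
    rw [e5]
    exact zComp_mem hwhom hmH _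
end

section
/- Let d ≥ 2 be an integer, let p be a prime number with p ≡ −1 (mod 2d), let K be a field of characteristic p, and set k = (p+1)/d − 1. If A, B, C ∈ K[X,Y] are homogeneous polynomials with deg A = deg B = (dk − d + 2)/2 and deg C = (dk − d)/2 such that A·X^p + B·Y^p + C·(X^d + Y^d)^{k+1} = 0 in K[X,Y], then A = B = C = 0. -/
section auxiliary

open Polynomial

theorem aux_const {L : Type*} [Field L] (p : ℕ) [CharP L p] (f : L[X])
    (h0 : derivative f = 0) (hdeg : f.natDegree < p) : f.natDegree = 0 := by
  by_contra h
  have hne : f ≠ 0 := fun hf => h (by simp [hf])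
  have hc : f.coeff f.natDegree ≠ 0 := mt leadingCoeff_eq_zero.mp hne
  have key := coeff_derivative f (f.natDegree - 1)
  rw [h0, coeff_zero] at key
  rw [Nat.sub_add_cancel (Nat.one_le_iff_ne_zero.mpr h)] at key
  have hcast : ((f.natDegree - 1 : ℕ) + 1 : L) ≠ 0 := by
    have hnd : ¬ (p ∣ f.natDegree) := Nat.not_dvd_of_pos_of_lt (Nat.pos_of_ne_zero h) hdeg
    have h2 : ((f.natDegree - 1 : ℕ) + 1 : L) = (((f.natDegree - 1) + 1 : ℕ) : L) := by
      push_cast; ring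
    rw [h2, Nat.sub_add_cancel (Nat.one_le_iff_ne_zero.mpr h)]
    rwa [Ne, CharP.cast_eq_zero_iff L p]
  exact hc (by have := mul_eq_zero.mp key.symm; tauto)

theorem aux_dep {L : Type*} [Field L] (p : ℕ) [CharP L p] (a b : L[X])
    (hW : derivative a * b = a * derivative b) (ha : a.natDegree < p) (hb : b.natDegree < p)
    (hbne : b ≠ 0) : ∃ lam : L, a = C lam * b := by
  rcases eq_or_ne a 0 with rfl | hane
  · exact ⟨0, by simp⟩
  classical
  letI : GCDMonoid L[X] := EuclideanDomain.gcdMonoid _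
  set g : L[X] := GCDMonoid.gcd a b with hg_def
  have hg : g ≠ 0 := gcd_ne_zero_of_right hbne
  set a1 : L[X] := a / g with ha1_def
  set b1 : L[X] := b / g with hb1_def
  have hA : g * a1 = a := EuclideanDomain.mul_div_cancel' hg (gcd_dvd_left a b)
  have hB : g * b1 = b := EuclideanDomain.mul_div_cancel' hg (gcd_dvd_right a b)
  have hcop : IsCoprime a1 b1 := isCoprime_div_gcd_div_gcd hbne
  have hb1 : b1 ≠ 0 := right_div_gcd_ne_zero hbne
  have ha1 : a1 ≠ 0 := left_div_gcd_ne_zero hane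
  have key : derivative a1 * b1 = a1 * derivative b1 := by
    have h2 : derivative (g * a1) * (g * b1) = (g * a1) * derivative (g * b1) := by
      rw [hA, hB]; exact hW
    rw [derivative_mul, derivative_mul] at h2
    have h3 : (g * g) * (derivative a1 * b1) = (g * g) * (a1 * derivative b1) := by
      linear_combination h2
    exact mul_left_cancel₀ (mul_ne_zero hg hg) h3
  have hb1' : derivative b1 = 0 := by
    by_contra hb1d
    have hdvd : b1 ∣ a1 * derivative b1 := ⟨derivative a1, by rw [← key]; ring⟩
    have hdvd2 : b1 ∣ derivative b1 := (hcop.symm).dvd_of_dvd_mul_left hdvd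
    have hdeg1 : b1.natDegree ≤ (derivative b1).natDegree := natDegree_le_of_dvd hdvd2 hb1d
    have hnd : b1.natDegree ≠ 0 := by
      intro h0
      exact hb1d (by rw [eq_C_of_natDegree_eq_zero h0]; simp)
    exact absurd hdeg1 (not_le.mpr (natDegree_derivative_lt hnd))
  have ha1' : derivative a1 = 0 := by
    rw [hb1', mul_zero] at key
    rcases mul_eq_zero.mp key with h | h
    · exact h
    · exact absurd h hb1
  have hda : a1.natDegree < p :=
    lt_of_le_of_lt (natDegree_le_of_dvd ⟨g, by rw [← hA]; ring⟩ hane) ha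
  have hdb : b1.natDegree < p :=
    lt_of_le_of_lt (natDegree_le_of_dvd ⟨g, by rw [← hB]; ring⟩ hbne) hb
  have hca := aux_const p a1 ha1' hda
  have hcb := aux_const p b1 hb1' hdb
  obtain ⟨u, hu⟩ : ∃ u, a1 = C u := ⟨a1.coeff 0, eq_C_of_natDegree_eq_zero hca⟩
  obtain ⟨v, hv⟩ : ∃ v, b1 = C v := ⟨b1.coeff 0, eq_C_of_natDegree_eq_zero hcb⟩
  have hvne : v ≠ 0 := by rintro rfl; exact hb1 (by simp [hv])
  refine ⟨u * v⁻¹, ?_⟩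
  rw [← hA, ← hB, hu, hv]
  rw [map_mul]
  have : (C v⁻¹ : L[X]) * C v = 1 := by rw [← map_mul, inv_mul_cancel₀ hvne, map_one]
  calc g * C u = (C u * C v⁻¹) * (C v * g) := by
        rw [show (C u * C v⁻¹) * (C v * g) = (C v⁻¹ * C v) * (C u * g) by ring, this]; ring
    _ = C u * C v⁻¹ * (g * C v) := by ring

theorem one_var {L : Type*} [Field L] [IsAlgClosed L] (p d t k : ℕ) [CharP L p]
    (hp : p.Prime) (hd : 2 ≤ d) (ht : 1 ≤ t) (hpt : p + 1 = 2 * d * t) (hk : k + 1 = 2 * t)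
    (a b c : L[X]) (ha : a.natDegree ≤ d * (t - 1) + 1) (hb : b.natDegree ≤ d * (t - 1) + 1)
    (hc : c.natDegree ≤ d * (t - 1))
    (heq : a * X ^ p + b + c * (X ^ d + 1) ^ (k + 1) = 0) : a = 0 ∧ b = 0 ∧ c = 0 := by
  classical
  obtain ⟨e, rfl⟩ : ∃ e, d = e + 2 := ⟨d - 2, by omega⟩
  obtain ⟨s, rfl⟩ : ∃ s, t = s + 1 := ⟨t - 1, by omega⟩
  set d := e + 2 with hd_def
  set t := s + 1 with ht_def
  have hkval : k = 2 * s + 1 := by omega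
  set m := d * (t - 1) with hm_def
  have hm : m = d * s := by simp [hm_def, ht_def]
  -- numeric facts
  have hd0 : d ≠ 0 := by omega
  have hm1p : m + 1 < p := by rw [hm]; nlinarith
  have hk1p : k + 1 ≤ p := by nlinarith
  have hdk : 2 * m + 1 < d * k := by rw [hm]; nlinarith
  have hdkm : m + 1 < d * (k + 1) := by rw [hm]; nlinarith
  have hfilter : m + 1 < (d - 1) * (k + 1) := by
    have : d - 1 = e + 1 := by omega
    rw [hm, this]; nlinarith
  -- the polynomial q = X^d + 1
  have hneg1 : (-1 : L) ≠ 0 := neg_ne_zero.mpr one_ne_zero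
  have hdL : (d : L) ≠ 0 := by
    rw [Ne, CharP.cast_eq_zero_iff L p]
    exact Nat.not_dvd_of_pos_of_lt (by omega) (by nlinarith)
  set q : L[X] := X ^ d - C (-1 : L) with hq_def
  have hq1 : q = X ^ d + 1 := by rw [hq_def, map_neg, map_one, sub_neg_eq_add]
  have hqm : q.Monic := monic_X_pow_sub_C _ hd0
  have hqne : q ≠ 0 := hqm.ne_zero
  have hsep : q.Separable := separable_X_pow_sub_C (-1 : L) hdL hneg1
  have hnodup : q.roots.Nodup := nodup_roots hsep
  have hsplits : q.Splits := IsAlgClosed.splits q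
  have hqdeg : q.natDegree = d := natDegree_X_pow_sub_C
  have hcard : q.roots.card = d := by rw [splits_iff_card_roots.mp hsplits, hqdeg]
  set S : Finset L := ⟨q.roots, hnodup⟩ with hS_def
  have hScard : S.card = d := hcard
  have hmemS : ∀ α, α ∈ S ↔ α ∈ q.roots := fun α => Iff.rfl
  have hprodS : ∏ α ∈ S, (X - C α) = q := by
    rw [Finset.prod_eq_multiset_prod]
    exact (hsplits.eq_prod_roots_of_monic hqm).symm
  -- root properties
  have hroot : ∀ α ∈ S, α ^ d = -1 := by
    intro α hα
    have := isRoot_of_mem_roots ((hmemS α).mp hα)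
    rw [hq_def, IsRoot, eval_sub, eval_pow, eval_X, eval_C] at this
    exact sub_eq_zero.mp this
  have hα0 : ∀ α ∈ S, α ≠ 0 := by
    intro α hα h0
    apply hneg1
    rw [← hroot α hα, h0, zero_pow hd0]
  have hαp1 : ∀ α ∈ S, α ^ (p + 1) = 1 := by
    intro α hα
    have hexp : p + 1 = d * (2 * t) := by rw [hpt]; ring
    have hexp2 : (2 : ℕ) * t = 2 * t := rfl
    calc α ^ (p + 1) = (α ^ d) ^ (2 * t) := by rw [hexp]; exact pow_mul α d (2*t)
      _ = ((α ^ d) ^ 2) ^ t := pow_mul (α ^ d) 2 t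
      _ = 1 := by rw [hroot α hα, neg_one_sq, one_pow]
  -- key divisibility
  have hdvdq : ∀ α ∈ S, (X - C α) ∣ q := fun α hα => dvd_iff_isRoot.mpr
    (isRoot_of_mem_roots ((hmemS α).mp hα))
  have hkey : ∀ α ∈ S, (X - C α) ^ (k + 1) ∣ a + C α * b := by
    intro α hα
    have h1 : a * X ^ p + b = -(c * q ^ (k + 1)) := by
      rw [hq1]; linear_combination heq
    have h2 : (X - C α) ^ (k + 1) ∣ a * X ^ p + b := by
      rw [h1]
      exact dvd_neg.mpr ((pow_dvd_pow_of_dvd (hdvdq α hα) (k + 1)).mul_left c)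
    haveI : Fact p.Prime := Fact.mk hp
    have h3 : (X : L[X]) ^ p = (X - C α) ^ p + C (α ^ p) := by
      have hf := sub_pow_char (R := L[X]) (x := X) (y := C α) (p := p)
      rw [← C_pow] at hf
      linear_combination -hf
    have h4 : (X - C α) ^ (k + 1) ∣ a * (X - C α) ^ p := (pow_dvd_pow _ hk1p).mul_left a
    have h5 : (X - C α) ^ (k + 1) ∣ C (α ^ p) * a + b := by
      have he : C (α ^ p) * a + b = (a * X ^ p + b) - a * (X - C α) ^ p := by
        rw [h3]; ring
      rw [he]; exact dvd_sub h2 h4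
    have hone : α * α ^ p = 1 := by rw [mul_comm, ← pow_succ, hαp1 α hα]
    have h6 : a + C α * b = C α * (C (α ^ p) * a + b) := by
      rw [mul_add, ← mul_assoc, ← C_mul, hone, map_one, one_mul]
    rw [h6]; exact h5.mul_left _
  -- the Wronskian
  set W : L[X] := derivative a * b - a * derivative b with hW_def
  have hWdvd : ∀ α ∈ S, (X - C α) ^ k ∣ W := by
    intro α hα
    obtain ⟨u, hu⟩ := hkey α hα
    refine ⟨C ((k + 1 : ℕ) : L) * u * b + (X - C α) * (derivative u * b - u * derivative b), ?_⟩
    have hder : derivative (a + C α * b) = derivative a + C α * derivative b := by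
      rw [derivative_add, derivative_C_mul]
    have hW2 : W = derivative (a + C α * b) * b - (a + C α * b) * derivative b := by
      rw [hder, hW_def]; ring
    rw [hW2, hu, derivative_mul, derivative_pow, derivative_X_sub_C, Nat.add_sub_cancel]
    ring
  have hpairk : (↑S : Set L).Pairwise (Function.onFun IsCoprime fun α => (X - C α) ^ k) := by
    intro α _ β _ hne
    exact (pairwise_coprime_X_sub_C Function.injective_id hne).pow
  have hqkW : q ^ k ∣ W := by
    rw [← hprodS, ← Finset.prod_pow]
    exact Finset.prod_dvd_of_coprime hpairk (fun α hα => hWdvd α hα)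
  have hWdeg : W.natDegree ≤ 2 * m + 1 := by
    have h1 := natDegree_derivative_le a
    have h2 := natDegree_derivative_le b
    have h3 := natDegree_mul_le (p := derivative a) (q := b)
    have h4 := natDegree_mul_le (p := a) (q := derivative b)
    have h5 := natDegree_sub_le (derivative a * b) (a * derivative b)
    rw [← hW_def] at h5
    have := max_le_iff.mp (le_refl (max (derivative a * b).natDegree (a * derivative b).natDegree))
    omega
  have hW0 : W = 0 := by
    by_contra hWne
    have hle := natDegree_le_of_dvd hqkW hWne
    rw [natDegree_pow, hqdeg] at hle
    have : k * d = d * k := mul_comm k d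
    omega
  -- b = 0
  have hb0 : b = 0 := by
    by_contra hbne
    have hW' : derivative a * b = a * derivative b := by
      have : derivative a * b - a * derivative b = 0 := hW0
      linear_combination this
    obtain ⟨lam, hlam⟩ := aux_dep p a b hW' (lt_of_le_of_lt ha hm1p)
      (lt_of_le_of_lt hb hm1p) hbne
    set T := S.filter (fun α => lam + α ≠ 0) with hT_def
    have hTdvd : ∀ α ∈ T, (X - C α) ^ (k + 1) ∣ b := by
      intro α hαT
      obtain ⟨hαS, hne0⟩ := Finset.mem_filter.mp hαT
      have h7 : a + C α * b = C (lam + α) * b := by rw [hlam, map_add]; ring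
      have h8 := hkey α hαS
      rw [h7] at h8
      have h9 : b = C (lam + α)⁻¹ * (C (lam + α) * b) := by
        rw [← mul_assoc, ← C_mul, inv_mul_cancel₀ hne0, map_one, one_mul]
      rw [h9]; exact h8.mul_left _
    have hpairT : (↑T : Set L).Pairwise (Function.onFun IsCoprime fun α => (X - C α) ^ (k + 1)) := by
      intro α _ β _ hne
      exact (pairwise_coprime_X_sub_C Function.injective_id hne).pow
    have hprodT : (∏ α ∈ T, (X - C α) ^ (k + 1)) ∣ b :=
      Finset.prod_dvd_of_coprime hpairT hTdvd
    have hdegT : (∏ α ∈ T, (X - C α) ^ (k + 1)).natDegree = T.card * (k + 1) := by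
      rw [natDegree_prod _ _ (fun α _ => pow_ne_zero _ (X_sub_C_ne_zero α))]
      have : ∀ α ∈ T, ((X - C α) ^ (k + 1)).natDegree = k + 1 := by
        intro α _
        rw [natDegree_pow, natDegree_X_sub_C, mul_one]
      rw [Finset.sum_congr rfl this, Finset.sum_const, smul_eq_mul]
    have hble := natDegree_le_of_dvd hprodT hbne
    rw [hdegT] at hble
    have hcardT : d - 1 ≤ T.card := by
      have hTsub : T ⊆ S := by rw [hT_def]; exact Finset.filter_subset _ _
      have hsd : S \ T ⊆ {-lam} := by
        intro α hα
        obtain ⟨hαS, hαT⟩ := Finset.mem_sdiff.mp hα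
        have : ¬ (lam + α ≠ 0) := by
          intro hne
          exact hαT (by rw [hT_def]; exact Finset.mem_filter.mpr ⟨hαS, hne⟩)
        rw [not_not] at this
        exact Finset.mem_singleton.mpr (eq_neg_of_add_eq_zero_right this)
      have hle1 : S.card - T.card ≤ 1 := by
        rw [← Finset.card_sdiff_of_subset hTsub]
        exact le_trans (Finset.card_le_card hsd) (by simp)
      have hle2 : T.card ≤ S.card := Finset.card_le_card hTsub
      omega
    have hmul : (d - 1) * (k + 1) ≤ T.card * (k + 1) := Nat.mul_le_mul_right _ hcardT
    linarith
  -- a = 0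
  have ha0 : a = 0 := by
    by_contra hane
    have hdvd : ∀ α ∈ S, (X - C α) ^ (k + 1) ∣ a := by
      intro α hα
      have := hkey α hα
      rwa [hb0, mul_zero, add_zero] at this
    have hpairk1 : (↑S : Set L).Pairwise (Function.onFun IsCoprime fun α => (X - C α) ^ (k + 1)) := by
      intro α _ β _ hne
      exact (pairwise_coprime_X_sub_C Function.injective_id hne).pow
    have hqa : q ^ (k + 1) ∣ a := by
      rw [← hprodS, ← Finset.prod_pow]
      exact Finset.prod_dvd_of_coprime hpairk1 hdvd
    have hle := natDegree_le_of_dvd hqa hane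
    rw [natDegree_pow, hqdeg] at hle
    have : (k + 1) * d = d * (k + 1) := mul_comm _ _
    omega
  -- c = 0
  have hc0 : c = 0 := by
    have hcq : c * (X ^ d + 1) ^ (k + 1) = 0 := by
      rw [ha0, hb0] at heq
      simpa using heq
    rcases mul_eq_zero.mp hcq with h | h
    · exact h
    · exact absurd h (by rw [← hq1]; exact pow_ne_zero _ hqne)
  exact ⟨ha0, hb0, hc0⟩

end auxiliary

open MvPolynomial

section dehomogenize

theorem fin2_degree (v : Fin 2 →₀ ℕ) : Finsupp.degree v = v 0 + v 1 := by
  rw [Finsupp.degree_apply]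
  rw [show (∑ i ∈ v.support, v i) = ∑ i : Fin 2, v i from
    Finset.sum_subset (Finset.subset_univ _)
      (fun i _ hi => Finsupp.notMem_support_iff.mp hi)]
  exact Fin.sum_univ_two v

theorem dehom_apply {K : Type*} [CommRing K] (A : MvPolynomial (Fin 2) K) :
    aeval ![Polynomial.X, (1 : Polynomial K)] A
      = ∑ v ∈ A.support, Polynomial.C (coeff v A) * Polynomial.X ^ (v 0) := by
  conv_lhs => rw [A.as_sum]
  rw [map_sum]
  apply Finset.sum_congr rfl
  intro v _
  rw [aeval_monomial]
  have h1 : v.prod (fun i e => (![Polynomial.X, (1 : Polynomial K)] i) ^ e)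
      = ∏ i : Fin 2, (![Polynomial.X, (1 : Polynomial K)] i) ^ (v i) :=
    Finsupp.prod_fintype _ _ (fun i => pow_zero _)
  rw [h1, Fin.prod_univ_two]
  simp [Polynomial.algebraMap_eq]

theorem dehom_zero {K : Type*} [CommRing K] {n : ℕ} (A : MvPolynomial (Fin 2) K)
    (hA : A.IsHomogeneous n) (h : aeval ![Polynomial.X, (1 : Polynomial K)] A = 0) :
    A = 0 := by
  ext μ
  rw [coeff_zero]
  by_cases hμ : Finsupp.degree μ = n
  · by_contra hne
    have hco := congrArg (fun f => Polynomial.coeff f (μ 0)) h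
    rw [dehom_apply] at hco
    simp only [Polynomial.finset_sum_coeff, Polynomial.coeff_C_mul, Polynomial.coeff_X_pow,
      Polynomial.coeff_zero] at hco
    rw [Finset.sum_eq_single μ] at hco
    · simp at hco; exact hne hco
    · intro v hv hvne
      rw [if_neg]
      · exact mul_zero _
      intro hv0
      apply hvne
      have hvdeg : Finsupp.degree v = n := by
        rw [Finsupp.degree_eq_weight_one]; exact hA (mem_support_iff.mp hv)
      rw [fin2_degree] at hvdeg hμ
      have hv1 : v 1 = μ 1 := by omega
      ext i
      refine Fin.cases ?_ ?_ i
      · exact hv0.symm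
      · intro j
        have : j = 0 := Subsingleton.elim j 0
        rw [this]
        exact hv1
    · intro hμs
      exact absurd (notMem_support_iff.mp hμs) hne
  · exact hA.coeff_eq_zero hμ

theorem dehom_deg {K : Type*} [CommRing K] {n : ℕ} (A : MvPolynomial (Fin 2) K)
    (hA : A.IsHomogeneous n) :
    (aeval ![Polynomial.X, (1 : Polynomial K)] A).natDegree ≤ n := by
  rw [dehom_apply]
  apply Polynomial.natDegree_sum_le_of_forall_le
  intro v hv
  have hvdeg : Finsupp.degree v = n := by
    rw [Finsupp.degree_eq_weight_one]; exact hA (mem_support_iff.mp hv)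
  rw [fin2_degree] at hvdeg
  calc (Polynomial.C (coeff v A) * Polynomial.X ^ (v 0)).natDegree
      ≤ (Polynomial.C (coeff v A)).natDegree + (Polynomial.X ^ (v 0) : Polynomial K).natDegree :=
        Polynomial.natDegree_mul_le
    _ ≤ v 0 := by
        simp only [Polynomial.natDegree_C, zero_add]
        calc (Polynomial.X ^ v 0 : Polynomial K).natDegree
            ≤ v 0 * (Polynomial.X : Polynomial K).natDegree := Polynomial.natDegree_pow_le
          _ ≤ v 0 * 1 := Nat.mul_le_mul_left _ Polynomial.natDegree_X_le
          _ = v 0 := mul_one _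
    _ ≤ n := by omega

end dehomogenize

/-- The vanishing used in Step 2 of the proof of the main theorem: in characteristic
`p ≡ -1 (mod 2d)`, with `k = (p+1)/d - 1`, every homogeneous syzygy of
`(X^p, Y^p, (X^d+Y^d)^{k+1})` of total degree `(3dk+d)/2` (component degrees
`(dk-d+2)/2`, `(dk-d+2)/2`, `(dk-d)/2`) is trivial. -/
theorem no_syzygy_of_higher_power (K : Type*) [Field K] (d : ℕ) (hd : 2 ≤ d)
    (p : ℕ) (hp : p.Prime) (hpd : 2 * d ∣ p + 1) [CharP K p]
    (k : ℕ) (hk : k = (p + 1) / d - 1)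
    (A B C : MvPolynomial (Fin 2) K)
    (hA : A.IsHomogeneous ((d * k - d + 2) / 2)) (hB : B.IsHomogeneous ((d * k - d + 2) / 2))
    (hC : C.IsHomogeneous ((d * k - d) / 2))
    (hsyz : A * X 0 ^ p + B * X 1 ^ p + C * (X 0 ^ d + X 1 ^ d) ^ (k + 1) = 0) :
    A = 0 ∧ B = 0 ∧ C = 0 := by
  -- numerics
  obtain ⟨t, hpt⟩ := hpd
  rw [mul_assoc] at hpt
  rw [← mul_assoc] at hpt
  have ht : 1 ≤ t := by
    rcases Nat.eq_zero_or_pos t with rfl | h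
    · rw [mul_zero] at hpt; omega
    · exact h
  obtain ⟨s, rfl⟩ : ∃ s, t = s + 1 := ⟨t - 1, by omega⟩
  have hdvd' : (p + 1) / d = 2 * (s + 1) := by
    rw [hpt, show 2 * d * (s + 1) = d * (2 * (s + 1)) by ring,
      Nat.mul_div_cancel_left _ (by omega : 0 < d)]
  have hk2t : k + 1 = 2 * (s + 1) := by rw [hk, hdvd']; omega
  have hdk : d * k = 2 * (d * s) + d := by
    have hkval : k = 2 * s + 1 := by omega
    rw [hkval]; ring
  have e1 : (d * k - d + 2) / 2 = d * s + 1 := by omega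
  have e2 : (d * k - d) / 2 = d * s := by omega
  have e3 : d * ((s + 1) - 1) = d * s := by simp
  rw [e1] at hA hB
  rw [e2] at hC
  -- dehomogenize
  set a₀ := aeval ![Polynomial.X, (1 : Polynomial K)] A with ha₀
  set b₀ := aeval ![Polynomial.X, (1 : Polynomial K)] B with hb₀
  set c₀ := aeval ![Polynomial.X, (1 : Polynomial K)] C with hc₀
  have heq₀ : a₀ * Polynomial.X ^ p + b₀ + c₀ * (Polynomial.X ^ d + 1) ^ (k + 1) = 0 := by
    have := congrArg (aeval ![Polynomial.X, (1 : Polynomial K)]) hsyz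
    simpa [ha₀, hb₀, hc₀] using this
  -- move to the algebraic closure
  set L := AlgebraicClosure K with hL
  haveI : CharP L p := charP_of_injective_algebraMap (algebraMap K L).injective p
  set ψ := Polynomial.mapRingHom (algebraMap K L) with hψ
  have heq₁ : (ψ a₀) * Polynomial.X ^ p + (ψ b₀)
      + (ψ c₀) * (Polynomial.X ^ d + 1) ^ (k + 1) = 0 := by
    have := congrArg ψ heq₀
    simpa [hψ] using this
  have hinj : Function.Injective (algebraMap K L) := (algebraMap K L).injective
  have hdeg : ∀ (D : MvPolynomial (Fin 2) K) (n : ℕ), D.IsHomogeneous n →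
      (ψ (aeval ![Polynomial.X, (1 : Polynomial K)] D)).natDegree ≤ n := by
    intro D n hD
    exact le_trans Polynomial.natDegree_map_le (dehom_deg D hD)
  obtain ⟨hA1, hB1, hC1⟩ := one_var p d (s + 1) k hp hd ht hpt hk2t
    (ψ a₀) (ψ b₀) (ψ c₀)
    (by rw [e3]; exact hdeg A _ hA) (by rw [e3]; exact hdeg B _ hB)
    (by rw [e3]; exact hdeg C _ hC) heq₁
  have hψinj : Function.Injective ψ := Polynomial.map_injective _ hinj
  have ha0 : a₀ = 0 := hψinj (by rw [hA1, map_zero])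
  have hb0 : b₀ = 0 := hψinj (by rw [hB1, map_zero])
  have hc0 : c₀ = 0 := hψinj (by rw [hC1, map_zero])
  exact ⟨dehom_zero A hA ha0, dehom_zero B hB hb0, dehom_zero C hC hc0⟩
end

section
/- Let d ≥ 2 be an integer, let p be a prime number with p ≡ −1 (mod 2d), let K be a field of characteristic p, and set k = (p+1)/d − 1. If A, B, C ∈ K[X,Y] are homogeneous polynomials with deg A = deg B = (3dk+d)/2 − 1 − p and deg C = (dk+d)/2 − 1 such that A·X^p + B·Y^p + C·(X^d + Y^d)^k = 0 in K[X,Y] (a homogeneous syzygy of total degree (3dk+d)/2 − 1), then A = B = C = 0. -/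
section SparseAux
open Polynomial

/-- A nonzero polynomial of degree `< p` (the characteristic) has root multiplicity at a
nonzero point strictly less than its number of terms. -/
lemma rootMultiplicity_lt_card_support {K : Type*} [Field K] (p : ℕ) [CharP K p]
    {x : K} (hx : x ≠ 0) :
    ∀ n (g : Polynomial K), g.natDegree = n → g ≠ 0 → g.natDegree < p →
      g.rootMultiplicity x < g.support.card := by
  intro n
  induction n using Nat.strong_induction_on with
  | _ n ih =>
    intro g hgn hg hgp
    by_cases hroot : g.IsRoot x
    · have hdeg1 : 1 ≤ g.natDegree := by
        rcases Nat.eq_zero_or_pos g.natDegree with h0 | h1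
        · obtain ⟨a, rfl⟩ := Polynomial.natDegree_eq_zero.mp h0
          simp [IsRoot.def] at hroot
          simp [hroot] at hg
        · exact h1
      by_cases hc0 : g.coeff 0 = 0
      · -- divide by X
        obtain ⟨h, rfl⟩ := (Polynomial.X_dvd_iff).mpr hc0
        have hh : h ≠ 0 := right_ne_zero_of_mul hg
        have hXd : (X : K[X]).natDegree = 1 := natDegree_X
        have hnd : (X * h).natDegree = 1 + h.natDegree := by
          rw [natDegree_mul X_ne_zero hh, natDegree_X]
        have hmult : (X * h).rootMultiplicity x = h.rootMultiplicity x := by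
          rw [rootMultiplicity_mul hg, rootMultiplicity_eq_zero (by simp [IsRoot.def, hx]), zero_add]
        have hsupp : (X * h).support.card = h.support.card := by
          have : (X * h).support = h.support.map ⟨fun i => i + 1, fun a b h => by simpa using h⟩ := by
            ext i
            simp only [Finset.mem_map, mem_support_iff, Function.Embedding.coeFn_mk]
            constructor
            · intro hi
              cases i with
              | zero => simp [coeff_X_mul_zero] at hi  -- coeff (X*h) 0 = 0
              | succ j =>
                refine ⟨j, ?_, rfl⟩
                rwa [Polynomial.coeff_X_mul] at hi
            · rintro ⟨j, hj, rfl⟩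
              show (X * h).coeff (j + 1) ≠ 0
              rwa [Polynomial.coeff_X_mul]
          rw [this, Finset.card_map]
        rw [hmult, hsupp]
        exact ih h.natDegree (by omega) h rfl hh (by omega)
      · -- use the derivative
        have hmu : 1 ≤ g.rootMultiplicity x := (le_rootMultiplicity_iff hg).mpr (by
          simpa [pow_one] using (dvd_iff_isRoot).mpr hroot)
        set g' := derivative g with hg'
        have hg'top : g'.coeff (g.natDegree - 1) ≠ 0 := by
          rw [hg', Polynomial.coeff_derivative]
          have h1 : g.natDegree - 1 + 1 = g.natDegree := by omega
          rw [h1]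
          have hlead : g.coeff g.natDegree ≠ 0 :=
            Polynomial.coeff_ne_zero_of_eq_degree (Polynomial.degree_eq_natDegree hg)
          apply mul_ne_zero hlead
          have hcast : ((g.natDegree - 1 : ℕ) : K) + 1 = ((g.natDegree : ℕ) : K) := by
            have hh : (g.natDegree - 1) + 1 = g.natDegree := by omega
            rw [← hh]; push_cast; ring
          rw [hcast]
          intro hzz
          rw [CharP.cast_eq_zero_iff K p] at hzz
          exact absurd (Nat.le_of_dvd (by omega) hzz) (by omega)
        have hg'ne : g' ≠ 0 := fun h => hg'top (by simp [h])
        have hg'deg : g'.natDegree < g.natDegree := Polynomial.natDegree_derivative_lt (by omega)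
        -- multiplicity drops by at most one
        have hmult : g.rootMultiplicity x ≤ g'.rootMultiplicity x + 1 := by
          obtain ⟨q, hq⟩ := Polynomial.pow_rootMultiplicity_dvd g x
          set μ := g.rootMultiplicity x
          have h1 : (X - Polynomial.C x) ^ μ = (X - Polynomial.C x) ^ (μ - 1) * (X - Polynomial.C x) := by
            rw [← pow_succ]; congr 1; omega
          have hdvd' : (X - Polynomial.C x) ^ (μ - 1) ∣ g' := by
            refine ⟨Polynomial.C (μ : K) * q + (X - Polynomial.C x) * derivative q, ?_⟩
            rw [hg', hq, derivative_mul, derivative_pow, Polynomial.derivative_X_sub_C, mul_one, h1]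
            ring
          have := (le_rootMultiplicity_iff hg'ne).mpr hdvd'
          omega
        -- support of derivative
        have hsupp : g'.support.card + 1 ≤ g.support.card := by
          have h0mem : (0 : ℕ) ∈ g.support := mem_support_iff.mpr hc0
          have hsub : g'.support ⊆ (g.support.erase 0).image (fun i => i - 1) := by
            intro i hi
            rw [mem_support_iff, hg', Polynomial.coeff_derivative] at hi
            have : g.coeff (i + 1) ≠ 0 := fun h => hi (by simp [h])
            refine Finset.mem_image.mpr ⟨i + 1, Finset.mem_erase.mpr ⟨by omega, mem_support_iff.mpr this⟩, by omega⟩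
          have hinj : Set.InjOn (fun i => i - 1) (g.support.erase 0) := by
            intro a ha b hb hab
            have ha' := (Finset.mem_erase.mp ha).1
            have hb' := (Finset.mem_erase.mp hb).1
            simp only at hab; omega
          have h1 := Finset.card_le_card hsub
          have h2 := Finset.card_image_of_injOn hinj
          have h3 := Finset.card_erase_of_mem h0mem
          have : 1 ≤ g.support.card := Finset.card_pos.mpr ⟨0, h0mem⟩
          omega
        have := ih g'.natDegree (by omega) g' rfl hg'ne (by omega)
        omega
    · rw [rootMultiplicity_eq_zero hroot]
      exact Finset.card_pos.mpr (Polynomial.support_nonempty.mpr hg)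


lemma univariate_core {K : Type*} [Field K] (p : ℕ) [CharP K p] (d m : ℕ)
    (hd : 2 ≤ d) (hm : 1 ≤ m) (hp : p = 2 * (d * m) - 1)
    (c : Polynomial K) (hcdeg : c.natDegree ≤ d * m - 1)
    (hvan : ∀ j, d * m - d < j → j < p →
      (c * (1 + X ^ d) ^ (2 * m - 1)).coeff j = 0) :
    c = 0 := by
  set n := 2 * m - 1 with hn
  have e1 : d * (2*m-1) + d = d * (2*m) := by
    have h : 2*m = (2*m-1) + 1 := by omega
    conv_rhs => rw [h]
    rw [Nat.mul_add, Nat.mul_one]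
  have e2 : d * (m-1) + d = d * m := by
    have h : m = (m-1) + 1 := by omega
    conv_rhs => rw [h]
    rw [Nat.mul_add, Nat.mul_one]
  have e3 : d * (2*m-2) + (d + d) = d * (2*m) := by
    have h : 2*m = (2*m-2) + 2 := by omega
    conv_rhs => rw [h]
    rw [Nat.mul_add, mul_two]
  have e4 : d * (2*m) = 2 * (d*m) := by ring
  have h2m : 2 * m ≤ d * m := Nat.mul_le_mul hd le_rfl
  have hmulcoeff : ∀ (q : Polynomial K) (e j : ℕ),
      (q * (1 + X ^ e) ^ n).coeff j
        = ∑ v ∈ Finset.range (n+1), (n.choose v : K) *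
            (if e*v ≤ j then q.coeff (j - e*v) else 0) := by
    intro q e j
    have hexp : (1 + (X : Polynomial K) ^ e) ^ n
        = ∑ v ∈ Finset.range (n+1), Polynomial.C ((n.choose v : K)) * X ^ (e*v) := by
      rw [add_comm, add_pow]
      refine Finset.sum_congr rfl fun v _ => ?_
      rw [one_pow, mul_one, ← pow_mul, map_natCast (Polynomial.C : K →+* Polynomial K)]
      ring
    rw [hexp, Finset.mul_sum, Polynomial.finset_sum_coeff]
    refine Finset.sum_congr rfl fun v _ => ?_
    rw [mul_left_comm, Polynomial.coeff_C_mul, Polynomial.coeff_mul_X_pow']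
  have hres : ∀ r, r < d → ∀ t, c.coeff (d * t + r) = 0 := by
    intro r hr
    set w := if r = 0 then m else m - 1 with hw
    set cr : Polynomial K := ∑ t ∈ Finset.range m, Polynomial.C (c.coeff (d*t+r)) * X ^ t
      with hcr_def
    have hcr : ∀ t, cr.coeff t = c.coeff (d*t+r) := by
      intro t
      rw [hcr_def, Polynomial.finset_sum_coeff]
      simp only [Polynomial.coeff_C_mul, Polynomial.coeff_X_pow, mul_ite, mul_one, mul_zero]
      rw [Finset.sum_ite_eq (Finset.range m) t]
      by_cases ht : t < m
      · rw [if_pos (Finset.mem_range.mpr ht)]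
      · rw [if_neg (by simpa using ht)]
        symm
        apply Polynomial.coeff_eq_zero_of_natDegree_lt
        have : d * m ≤ d * t := Nat.mul_le_mul le_rfl (by omega)
        omega
    have hcrdeg : cr.natDegree ≤ m - 1 := by
      apply Polynomial.natDegree_le_iff_coeff_eq_zero.mpr
      intro t ht
      rw [hcr]
      apply Polynomial.coeff_eq_zero_of_natDegree_lt
      have : d * m ≤ d * t := Nat.mul_le_mul le_rfl (by omega)
      omega
    set er : Polynomial K := cr * (1 + X) ^ n with her_def
    have hercoeff : ∀ s, er.coeff s = (c * (1 + X ^ d) ^ n).coeff (d * s + r) := by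
      intro s
      have h1 := hmulcoeff cr 1 s
      simp only [one_mul] at h1
      have h2 := hmulcoeff c d (d * s + r)
      rw [her_def, show (1 + (X : Polynomial K)) = 1 + X ^ 1 by rw [pow_one], h1, h2]
      refine Finset.sum_congr rfl fun v hv => ?_
      congr 1
      by_cases hvs : v ≤ s
      · have hds : d * (s - v) + d * v = d * s := by rw [← Nat.mul_add]; congr 1; omega
        have hdvs : d * v ≤ d * s := Nat.mul_le_mul le_rfl hvs
        have c2 : d * v ≤ d * s + r := by omega
        rw [if_pos hvs, if_pos c2, hcr]
        congr 1
        omega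
      · have hgt : ¬ (d * v ≤ d * s + r) := by
          have h1' : d * (s+1) ≤ d * v := Nat.mul_le_mul le_rfl (by omega)
          have h2' : d * (s+1) = d * s + d := by rw [Nat.mul_add, Nat.mul_one]
          omega
        rw [if_neg hvs, if_neg hgt]
    have hwin : ∀ s, w ≤ s → s < w + m → er.coeff s = 0 := by
      intro s hs1 hs2
      rw [hercoeff]
      apply hvan
      · by_cases hr0 : r = 0
        · rw [hw, if_pos hr0] at hs1
          have : d * m ≤ d * s := Nat.mul_le_mul le_rfl hs1
          omega
        · rw [hw, if_neg hr0] at hs1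
          have : d * (m-1) ≤ d * s := Nat.mul_le_mul le_rfl hs1
          omega
      · by_cases hr0 : r = 0
        · rw [hw, if_pos hr0] at hs2
          have : d * s ≤ d * (2*m-1) := Nat.mul_le_mul le_rfl (by omega)
          omega
        · rw [hw, if_neg hr0] at hs2
          have : d * s ≤ d * (2*m-2) := Nat.mul_le_mul le_rfl (by omega)
          omega
    have herdeg : er.natDegree ≤ 3 * m - 2 := by
      have h2 : ((1 + X : Polynomial K) ^ n).natDegree ≤ n := by
        refine le_trans (Polynomial.natDegree_pow_le) ?_
        have h3 : (1 + X : Polynomial K).natDegree ≤ 1 := by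
          refine le_trans (Polynomial.natDegree_add_le _ _) ?_
          simp
        calc n * (1 + X : Polynomial K).natDegree ≤ n * 1 := Nat.mul_le_mul le_rfl h3
          _ = n := Nat.mul_one n
      refine le_trans (Polynomial.natDegree_mul_le) ?_
      omega
    have hcard : er.support.card ≤ 2 * m - 1 := by
      have hsub : er.support ⊆ Finset.range (3*m - 1) \ Finset.Ico w (w + m) := by
        intro i hi
        have hcoeff := Polynomial.mem_support_iff.mp hi
        rw [Finset.mem_sdiff, Finset.mem_range, Finset.mem_Ico]
        constructor
        · have := Polynomial.le_natDegree_of_ne_zero hcoeff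
          omega
        · intro hmem
          exact hcoeff (hwin i hmem.1 hmem.2)
      refine le_trans (Finset.card_le_card hsub) ?_
      rw [Finset.card_sdiff_of_subset (by
        intro i hi
        rw [Finset.mem_Ico] at hi
        rw [Finset.mem_range]
        have hw' : w ≤ m := by rw [hw]; split <;> omega
        omega)]
      rw [Nat.card_Ico, Finset.card_range]
      have hw' : w ≤ m := by rw [hw]; split <;> omega
      omega
    intro t
    rw [← hcr]
    by_contra hct
    have hcrne : cr ≠ 0 := fun h => hct (by rw [h, Polynomial.coeff_zero])
    have h1X : (1 + X : Polynomial K) ≠ 0 := by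
      intro h
      have := congrArg (fun q => Polynomial.coeff q 1) h
      simp [Polynomial.coeff_one] at this
    have herne : er ≠ 0 := by
      rw [her_def]
      exact mul_ne_zero hcrne (pow_ne_zero _ h1X)
    have hmult : n ≤ er.rootMultiplicity (-1) := by
      rw [her_def, Polynomial.rootMultiplicity_mul (her_def ▸ herne)]
      have hXC : (1 + X : Polynomial K) = X - Polynomial.C (-1) := by
        rw [map_neg, Polynomial.C_1, sub_neg_eq_add, add_comm]
      rw [hXC, Polynomial.rootMultiplicity_X_sub_C_pow]
      omega
    have hlt := rootMultiplicity_lt_card_support p (by simp : (-1 : K) ≠ 0)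
      er.natDegree er rfl herne (by omega)
    omega
  ext j
  rw [Polynomial.coeff_zero]
  have := hres (j % d) (Nat.mod_lt _ (by omega)) (j / d)
  rwa [Nat.div_add_mod] at this


end SparseAux

noncomputable def theta (K : Type*) [CommSemiring K] :
    MvPolynomial (Fin 2) K →ₐ[K] Polynomial K :=
  MvPolynomial.aeval ![1, Polynomial.X]

lemma theta_coeff {K : Type*} [CommSemiring K] (P : MvPolynomial (Fin 2) K) (j : ℕ) :
    (theta K P).coeff j
      = ∑ μ ∈ P.support, if μ 1 = j then P.coeff μ else 0 := by
  conv_lhs => rw [P.as_sum]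
  rw [map_sum, Polynomial.finset_sum_coeff]
  refine Finset.sum_congr rfl fun μ _ => ?_
  rw [theta, MvPolynomial.aeval_monomial]
  have hprod : (μ.prod fun n e => (![(1 : Polynomial K), Polynomial.X] n) ^ e)
      = Polynomial.X ^ (μ 1) := by
    rw [Finsupp.prod_fintype _ _ (fun i => pow_zero (![(1 : Polynomial K), Polynomial.X] i))]
    rw [Fin.prod_univ_two]
    simp
  rw [hprod]
  simp [Polynomial.coeff_X_pow, Polynomial.coeff_C_mul, Polynomial.algebraMap_eq, eq_comm]

lemma homog_degree_eq {K : Type*} [CommSemiring K] {P : MvPolynomial (Fin 2) K} {N : ℕ}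
    (hP : P.IsHomogeneous N) {μ : Fin 2 →₀ ℕ} (hμ : MvPolynomial.coeff μ P ≠ 0) :
    μ 0 + μ 1 = N := by
  have hdeg : μ.degree = N := by
    by_contra h
    exact hμ (hP.coeff_eq_zero h)
  rw [← hdeg, Finsupp.degree]
  show μ 0 + μ 1 = ∑ i ∈ μ.support, μ i
  rw [Finset.sum_subset (Finset.subset_univ μ.support) (by
    intro x _ hx
    simpa using (Finsupp.notMem_support_iff.mp hx))]
  exact Fin.sum_univ_two μ

lemma theta_coeff_homog {K : Type*} [CommSemiring K] {P : MvPolynomial (Fin 2) K} {N : ℕ}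
    (hP : P.IsHomogeneous N) (i j : ℕ) (hij : i + j = N) :
    (theta K P).coeff j
      = MvPolynomial.coeff (Finsupp.single 0 i + Finsupp.single 1 j) P := by
  rw [theta_coeff]
  set ν : Fin 2 →₀ ℕ := Finsupp.single 0 i + Finsupp.single 1 j with hν
  have hν1 : ν 1 = j := by simp [hν, Finsupp.single_apply]
  rw [Finset.sum_eq_single ν]
  · rw [if_pos hν1]
  · intro μ hμ hne
    rw [if_neg]
    intro h1
    apply hne
    have hc := MvPolynomial.mem_support_iff.mp hμ
    have hdeg := homog_degree_eq hP hc
    have h0 : μ 0 = i := by omega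
    ext x
    fin_cases x
    · simpa [hν, Finsupp.single_apply] using h0
    · simpa [hν, Finsupp.single_apply] using h1
  · intro hν'
    rw [if_pos hν1, MvPolynomial.notMem_support_iff.mp hν']

lemma theta_coeff_zero_of_gt {K : Type*} [CommSemiring K] {P : MvPolynomial (Fin 2) K} {N : ℕ}
    (hP : P.IsHomogeneous N) {j : ℕ} (hj : N < j) :
    (theta K P).coeff j = 0 := by
  rw [theta_coeff]
  refine Finset.sum_eq_zero fun μ hμ => ?_
  rw [if_neg]
  have := homog_degree_eq hP (MvPolynomial.mem_support_iff.mp hμ)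
  omega

lemma theta_natDegree_le {K : Type*} [CommSemiring K] {P : MvPolynomial (Fin 2) K} {N : ℕ}
    (hP : P.IsHomogeneous N) : (theta K P).natDegree ≤ N :=
  Polynomial.natDegree_le_iff_coeff_eq_zero.mpr fun _ h => theta_coeff_zero_of_gt hP h

lemma theta_eq_zero_iff {K : Type*} [CommSemiring K] {P : MvPolynomial (Fin 2) K} {N : ℕ}
    (hP : P.IsHomogeneous N) : theta K P = 0 ↔ P = 0 := by
  constructor
  · intro h
    apply MvPolynomial.eq_zero_iff.mpr
    intro μ
    by_contra hμ
    have hdeg := homog_degree_eq hP hμ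
    have hμeq : μ = Finsupp.single 0 (μ 0) + Finsupp.single 1 (μ 1) := by
      ext x; fin_cases x <;> simp [Finsupp.single_apply]
    have := theta_coeff_homog hP (μ 0) (μ 1) hdeg
    rw [h] at this
    simp only [Polynomial.coeff_zero] at this
    exact hμ (by rw [hμeq, ← this])
  · intro h; rw [h, map_zero]


open MvPolynomial

/-- The vanishing `Γ(C, S_k((3dk+d)/2 - 1)) = 0` from Step 1 of the proof of the main
theorem: in characteristic `p ≡ -1 (mod 2d)`, with `k = (p+1)/d - 1`, every homogeneous
syzygy of `(X^p, Y^p, (X^d+Y^d)^k)` of total degree `(3dk+d)/2 - 1` (component degrees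
`(3dk+d)/2 - 1 - p`, `(3dk+d)/2 - 1 - p`, `(dk+d)/2 - 1`) is trivial. -/
theorem no_syzygy_below_initial_degree (K : Type*) [Field K] (d : ℕ) (hd : 2 ≤ d)
    (p : ℕ) (hp : p.Prime) (hpd : 2 * d ∣ p + 1) [CharP K p]
    (k : ℕ) (hk : k = (p + 1) / d - 1)
    (A B C : MvPolynomial (Fin 2) K)
    (hA : A.IsHomogeneous ((3 * d * k + d) / 2 - 1 - p))
    (hB : B.IsHomogeneous ((3 * d * k + d) / 2 - 1 - p))
    (hC : C.IsHomogeneous ((d * k + d) / 2 - 1))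
    (hsyz : A * X 0 ^ p + B * X 1 ^ p + C * (X 0 ^ d + X 1 ^ d) ^ k = 0) :
    A = 0 ∧ B = 0 ∧ C = 0 := by
  obtain ⟨m, hm⟩ := hpd
  have hd0 : 0 < d := by omega
  have hm1 : 1 ≤ m := by
    rcases Nat.eq_zero_or_pos m with h | h
    · rw [h, Nat.mul_zero] at hm; omega
    · exact h
  have hpd' : p + 1 = d * (2 * m) := by rw [hm]; ring
  have hk2 : k = 2 * m - 1 := by
    rw [hk, hpd', Nat.mul_div_cancel_left _ hd0]
  have hdk : d * k + d = 2 * (d * m) := by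
    rw [hk2]
    have h : d * (2*m-1) + d = d * (2*m) := by
      have h2 : 2*m = (2*m-1)+1 := by omega
      conv_rhs => rw [h2]
      rw [Nat.mul_add, Nat.mul_one]
    rw [h]; ring
  have h3dk : 3 * d * k = 3 * (d * k) := by ring
  have e4 : d * (2*m) = 2 * (d * m) := by ring
  have hpM : p = 2 * (d * m) - 1 := by omega
  have hdm : d ≤ d * m := by
    calc d = d * 1 := (Nat.mul_one d).symm
      _ ≤ d * m := Nat.mul_le_mul le_rfl hm1
  have h2m : 2 * m ≤ d * m := Nat.mul_le_mul hd le_rfl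
  have hNA : (3 * d * k + d) / 2 - 1 - p = d * m - d := by omega
  have hNC : (d * k + d) / 2 - 1 = d * m - 1 := by omega
  rw [hNA] at hA hB
  rw [hNC] at hC
  have htheta := congrArg (theta K) hsyz
  have hX0 : theta K (X 0) = 1 := by simp [theta]
  have hX1 : theta K (X 1) = Polynomial.X := by simp [theta]
  simp only [map_add, map_mul, map_pow, map_zero, hX0, hX1, one_pow, mul_one] at htheta
  set a := theta K A with ha_def
  set b := theta K B with hb_def
  set c := theta K C with hc_def
  have hadeg : a.natDegree ≤ d*m - d := theta_natDegree_le hA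
  have hbdeg : b.natDegree ≤ d*m - d := theta_natDegree_le hB
  have hcdeg : c.natDegree ≤ d*m - 1 := theta_natDegree_le hC
  have hvan : ∀ j, d*m - d < j → j < p →
      (c * (1 + Polynomial.X ^ d) ^ (2*m-1)).coeff j = 0 := by
    intro j h1 h2
    rw [← hk2]
    have hco := Polynomial.ext_iff.mp htheta j
    rw [Polynomial.coeff_add, Polynomial.coeff_add, Polynomial.coeff_zero] at hco
    have ha0 : a.coeff j = 0 := Polynomial.coeff_eq_zero_of_natDegree_lt (by omega)
    have hb0 : (b * Polynomial.X ^ p).coeff j = 0 := by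
      rw [Polynomial.coeff_mul_X_pow', if_neg (by omega)]
    rw [ha0, hb0, zero_add, zero_add] at hco
    exact hco
  have hc0 : c = 0 := univariate_core p d m hd hm1 hpM c hcdeg hvan
  rw [hc0, zero_mul, add_zero] at htheta
  have ha0 : a = 0 := by
    ext j
    rw [Polynomial.coeff_zero]
    by_cases hj : j < p
    · have hco := Polynomial.ext_iff.mp htheta j
      rw [Polynomial.coeff_add, Polynomial.coeff_mul_X_pow', if_neg (by omega),
        add_zero, Polynomial.coeff_zero] at hco
      exact hco
    · exact Polynomial.coeff_eq_zero_of_natDegree_lt (by omega)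
  rw [ha0, zero_add] at htheta
  have hb0 : b = 0 := by
    rcases mul_eq_zero.mp htheta with h | h
    · exact h
    · exact absurd h (pow_ne_zero _ Polynomial.X_ne_zero)
  exact ⟨(theta_eq_zero_iff hA).mp ha0, (theta_eq_zero_iff hB).mp hb0,
    (theta_eq_zero_iff hC).mp hc0⟩
end

section
/- Let (R, m) be a Noetherian local domain of prime characteristic p, let e ≥ 1 be an integer, and let F^e: R → R denote the e-th iterate of the Frobenius endomorphism r ↦ r^{p^e}. Let M be a finitely generated R-module. If M is isomorphic as an R-module to the base change M ⊗_{R, F^e} R of M along F^e, then M is a free R-module. -/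
noncomputable section

/-- `R` regarded as an `R`-algebra via a ring endomorphism `f : R →+* R`
(type synonym). -/
def FrobAlg (R : Type*) [CommRing R] (_f : R →+* R) : Type _ := R

instance (R : Type*) [CommRing R] (f : R →+* R) : CommRing (FrobAlg R f) :=
  inferInstanceAs (CommRing R)

/-- The identity map, viewed as a ring homomorphism `R →+* FrobAlg R f`. -/
def FrobAlg.fromBase (R : Type*) [CommRing R] (f : R →+* R) : R →+* FrobAlg R f :=
  RingHom.id R

/-- The structure morphism of `FrobAlg R f`: the map `f` itself. -/
def FrobAlg.structureMap (R : Type*) [CommRing R] (f : R →+* R) : R →+* FrobAlg R f := f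

instance (R : Type*) [CommRing R] (f : R →+* R) : Algebra R (FrobAlg R f) :=
  (FrobAlg.structureMap R f).toAlgebra

/-- The pull-back `M ⊗_{R,f} R` of an `R`-module `M` along a ring endomorphism
`f : R →+* R`: the tensor product of `M` with `R`, where `R` is regarded as an
`R`-algebra via `f`. Its `R`-module structure comes from the plain ring structure of
the `R`-factor. -/
def FrobPull (R : Type*) [CommRing R] (f : R →+* R) (M : Type*) [AddCommGroup M]
    [Module R M] : Type _ :=
  TensorProduct R (FrobAlg R f) M

instance (R : Type*) [CommRing R] (f : R →+* R) (M : Type*) [AddCommGroup M]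
    [Module R M] : AddCommGroup (FrobPull R f M) :=
  inferInstanceAs (AddCommGroup (TensorProduct R (FrobAlg R f) M))

instance (R : Type*) [CommRing R] (f : R →+* R) (M : Type*) [AddCommGroup M]
    [Module R M] : Module (FrobAlg R f) (FrobPull R f M) :=
  inferInstanceAs (Module (FrobAlg R f) (TensorProduct R (FrobAlg R f) M))

instance (R : Type*) [CommRing R] (f : R →+* R) (M : Type*) [AddCommGroup M]
    [Module R M] : Module R (FrobPull R f M) :=
  Module.compHom _ (FrobAlg.fromBase R f)

open Function TensorProduct LinearMap

section Aux
variable {R : Type*} [CommRing R] (f : R →+* R)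
variable {M N : Type*} [AddCommGroup M] [Module R M] [AddCommGroup N] [Module R N]

/-- Functorial action of `FrobPull` on linear maps. -/
def FrobPull.map (ψ : M →ₗ[R] N) : FrobPull R f M →ₗ[R] FrobPull R f N where
  toFun := ψ.baseChange (FrobAlg R f)
  map_add' := map_add _
  map_smul' r x := (ψ.baseChange (FrobAlg R f)).map_smul (FrobAlg.fromBase R f r) x

lemma FrobPull.map_apply (ψ : M →ₗ[R] N) (x : FrobPull R f M) :
    FrobPull.map f ψ x = LinearMap.lTensor (FrobAlg R f) ψ x := by
  rw [show (FrobPull.map f ψ x : TensorProduct R (FrobAlg R f) N)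
    = ψ.baseChange (FrobAlg R f) x from rfl, LinearMap.baseChange_eq_ltensor]

lemma FrobPull.map_surjective {ψ : M →ₗ[R] N} (hψ : Surjective ψ) :
    Surjective (FrobPull.map f ψ) := by
  intro z
  obtain ⟨y, hy⟩ := LinearMap.lTensor_surjective (FrobAlg R f) hψ (z : TensorProduct R (FrobAlg R f) N)
  exact ⟨y, (FrobPull.map_apply f ψ y).trans hy⟩

end Aux
section Aux2
variable {R : Type*} [CommRing R] (f : R →+* R)
variable {ι : Type*} [Fintype ι] [DecidableEq ι]

/-- The identity, as a ring hom `FrobAlg R f →+* R`. -/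
def FrobAlg.down : FrobAlg R f →+* R := RingHom.id R

lemma FrobAlg.smul_def' (r : R) (a : FrobAlg R f) :
    r • a = FrobAlg.structureMap R f r * a := rfl

lemma FrobAlg.down_smul (r : R) (a : FrobAlg R f) :
    FrobAlg.down f (r • a) = f r * FrobAlg.down f a := rfl

/-- The standard map `(ι → R) → FrobPull R f (ι → R)`, `v ↦ ∑ i, v i ⊗ eᵢ`. -/
def FrobPull.ofPi : (ι → R) →ₗ[R] FrobPull R f (ι → R) where
  toFun v := ∑ i, (FrobAlg.fromBase R f (v i)) ⊗ₜ[R] (Pi.single i 1 : ι → R)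
  map_add' u v := by
    simp only [Pi.add_apply, map_add, TensorProduct.add_tmul]
    exact Finset.sum_add_distrib
  map_smul' r v := by
    show ∑ i, (FrobAlg.fromBase R f (r * v i)) ⊗ₜ[R] (Pi.single i 1 : ι → R)
      = FrobAlg.fromBase R f r • ∑ i, (FrobAlg.fromBase R f (v i)) ⊗ₜ[R] (Pi.single i 1 : ι → R)
    rw [Finset.smul_sum]
    refine Finset.sum_congr rfl fun i _ => ?_
    rw [TensorProduct.smul_tmul', smul_eq_mul, map_mul]

lemma FrobPull.ofPi_apply (v : ι → R) :
    FrobPull.ofPi f v = ∑ i, (FrobAlg.fromBase R f (v i)) ⊗ₜ[R] (Pi.single i 1 : ι → R) := rfl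

/-- The coordinate additive map `FrobPull R f (ι → R) →+ R`, `a ⊗ v ↦ a * f (v i)`. -/
def FrobPull.coordAdd (i : ι) : FrobPull R f (ι → R) →+ R :=
  TensorProduct.liftAddHom
    { toFun := fun a =>
        { toFun := fun v => FrobAlg.down f a * f (v i)
          map_zero' := by simp
          map_add' := fun u v => by simp [Pi.add_apply, map_add, mul_add]
        }
      map_zero' := by ext v; simp
      map_add' := fun a b => by ext v; simp [map_add, add_mul]
    }
    (fun r a v => by
      show FrobAlg.down f (r • a) * f (v i) = FrobAlg.down f a * f (r * v i)
      rw [FrobAlg.down_smul, map_mul]; ring)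

lemma FrobPull.coordAdd_tmul (i : ι) (a : FrobAlg R f) (v : ι → R) :
    FrobPull.coordAdd f i ((a ⊗ₜ[R] v : TensorProduct R (FrobAlg R f) (ι → R)) : FrobPull R f (ι → R))
      = FrobAlg.down f a * f (v i) := rfl

lemma FrobPull.coordAdd_ofPi (i : ι) (v : ι → R) :
    FrobPull.coordAdd f i (FrobPull.ofPi f v) = v i := by
  rw [FrobPull.ofPi_apply]
  refine (map_sum (FrobPull.coordAdd f i) _ _).trans ?_
  have : ∀ j, FrobPull.coordAdd f i
      ((FrobAlg.fromBase R f (v j)) ⊗ₜ[R] (Pi.single j 1 : ι → R))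
      = if j = i then v j else 0 := by
    intro j
    rw [FrobPull.coordAdd_tmul]
    by_cases hji : j = i
    · subst hji; simp [Pi.single_apply, FrobAlg.down, FrobAlg.fromBase]; rfl
    · simp [Pi.single_apply, hji]
  rw [Finset.sum_congr rfl fun j _ => this j]
  simp

/-- `ofPi` is surjective. -/
lemma FrobPull.ofPi_surjective : Function.Surjective (FrobPull.ofPi (ι := ι) f) := by
  have : ∀ z : TensorProduct R (FrobAlg R f) (ι → R), ∃ w, FrobPull.ofPi f w = z := by
    intro z
    induction z with
    | zero => exact ⟨0, by rw [map_zero]; rfl⟩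
    | tmul a v =>
      refine ⟨fun i => FrobAlg.down f a * f (v i), ?_⟩
      rw [FrobPull.ofPi_apply]
      have hv : v = ∑ j, (v j) • (Pi.single j 1 : ι → R) := by
        rw [← Finset.univ_sum_single v]
        refine Finset.sum_congr rfl fun j _ => ?_
        ext l
        simp [Pi.single_apply, mul_comm]
      calc ∑ j, (FrobAlg.fromBase R f (FrobAlg.down f a * f (v j)))
              ⊗ₜ[R] (Pi.single j 1 : ι → R)
          = ∑ j, (a ⊗ₜ[R] ((v j) • (Pi.single j 1 : ι → R))) := by
            refine Finset.sum_congr rfl fun j _ => ?_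
            rw [TensorProduct.tmul_smul, TensorProduct.smul_tmul']
            congr 1
            show FrobAlg.fromBase R f (FrobAlg.down f a * f (v j)) = v j • a
            rw [FrobAlg.smul_def' f]
            show FrobAlg.down f a * f (v j) = f (v j) * FrobAlg.down f a
            ring
        _ = a ⊗ₜ[R] v := by rw [← TensorProduct.tmul_sum, ← hv]
    | add x y hx hy =>
      obtain ⟨w, hw⟩ := hx
      obtain ⟨w', hw'⟩ := hy
      exact ⟨w + w', by rw [map_add, hw, hw']; rfl⟩
  exact this

end Aux2
section Aux3
variable {R : Type*} [CommRing R]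
variable {ι : Type*} [Fintype ι] [DecidableEq ι]

lemma mem_ideal_smul_top_pi_iff {I : Ideal R} {v : ι → R} :
    v ∈ I • (⊤ : Submodule R (ι → R)) ↔ ∀ i, v i ∈ I := by
  constructor
  · intro hv i
    refine Submodule.smul_induction_on hv (fun r hr x _ => ?_) (fun x y hx hy => ?_)
    · exact I.mul_mem_right _ hr
    · exact I.add_mem hx hy
  · intro hv
    rw [← Finset.univ_sum_single v]
    refine Submodule.sum_mem _ fun i _ => ?_
    have : (Pi.single i (v i) : ι → R) = v i • (Pi.single i 1 : ι → R) := by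
      ext l; simp [Pi.single_apply, mul_comm]
    rw [this]
    exact Submodule.smul_mem_smul (hv i) Submodule.mem_top

variable (f : R →+* R)

set_option synthInstance.maxHeartbeats 800000 in
lemma FrobPull.coordAdd_mem_of_range
    {K : Submodule R (ι → R)} {J : Ideal R} (hK : ∀ v ∈ K, ∀ i, f (v i) ∈ J)
    (y : TensorProduct R (FrobAlg R f) K) (i : ι) :
    FrobPull.coordAdd f i ((LinearMap.lTensor (FrobAlg R f) K.subtype y :
      TensorProduct R (FrobAlg R f) (ι → R)) : FrobPull R f (ι → R)) ∈ J := by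
  induction y with
  | zero => rw [map_zero]; exact (map_zero (FrobPull.coordAdd f i)) ▸ J.zero_mem
  | tmul a k =>
    rw [LinearMap.lTensor_tmul]
    rw [FrobPull.coordAdd_tmul]
    exact J.mul_mem_left _ (hK k.1 k.2 i)
  | add x y hx hy =>
    rw [map_add]
    have := J.add_mem hx hy
    exact (congrArg (· ∈ J) (map_add (FrobPull.coordAdd f i) _ _)).mpr this

end Aux3
section Aux4
open IsLocalRing Function
variable {R : Type*} [CommRing R] [IsLocalRing R] [IsNoetherianRing R]
variable {ι : Type*} [Fintype ι] [DecidableEq ι]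
variable {M : Type*} [AddCommGroup M] [Module R M]

/-- Transfer a kernel bound between two surjections from the same finite free module,
provided the source one has kernel inside `𝔪 • ⊤`. -/
lemma ker_le_of_ker_le {φ ψ : (ι → R) →ₗ[R] M} (hφ : Surjective φ) (hψ : Surjective ψ)
    (hkψ : LinearMap.ker ψ ≤ (maximalIdeal R) • ⊤) (s : ℕ)
    (hs : LinearMap.ker ψ ≤ (maximalIdeal R) ^ s • ⊤) :
    LinearMap.ker φ ≤ (maximalIdeal R) ^ s • ⊤ := by
  -- choose a lift `u` with `ψ ∘ u = φ`
  choose c hc using fun i => hψ (φ (Pi.single i 1))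
  set u : (ι → R) →ₗ[R] (ι → R) :=
    { toFun := fun v => ∑ i, v i • c i
      map_add' := fun x y => by simp [add_smul, Finset.sum_add_distrib]
      map_smul' := fun r x => by simp [Finset.smul_sum, smul_smul] } with hu
  have hvsum : ∀ v : ι → R, ∑ i, v i • (Pi.single i 1 : ι → R) = v := by
    intro v
    rw [← Finset.univ_sum_single v]
    refine Finset.sum_congr rfl fun i _ => ?_
    ext l; simp [Pi.single_apply, mul_comm]
  have hcomp : ψ.comp u = φ := by
    apply LinearMap.ext; intro v
    show ψ (∑ i, v i • c i) = φ v
    rw [map_sum]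
    simp_rw [map_smul, hc]
    calc ∑ i, v i • φ (Pi.single i 1) = ∑ i, φ (v i • (Pi.single i 1 : ι → R)) := by
          simp [map_smul]
      _ = φ (∑ i, v i • (Pi.single i 1 : ι → R)) := by rw [map_sum]
      _ = φ v := by rw [hvsum]
  -- `u` is surjective by Nakayama
  have hurange : ⊤ ≤ LinearMap.range u ⊔ (maximalIdeal R) • (⊤ : Submodule R (ι → R)) := by
    intro x _
    obtain ⟨y, hy⟩ := hφ (ψ x)
    have : x - u y ∈ LinearMap.ker ψ := by
      rw [LinearMap.mem_ker, map_sub, ← LinearMap.comp_apply, hcomp, hy, sub_self]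
    have hx : x = u y + (x - u y) := by ring
    rw [hx]
    exact Submodule.add_mem_sup (LinearMap.mem_range_self u y) (hkψ this)
  have husurj : Surjective u := by
    rw [← LinearMap.range_eq_top]
    rw [← top_le_iff]
    refine Submodule.le_of_le_smul_of_le_jacobson_bot (I := maximalIdeal R)
      (Module.Finite.fg_top (R := R)) (le_of_eq (IsLocalRing.jacobson_eq_maximalIdeal ⊥ bot_ne_top).symm) hurange
  have huinj : Injective u :=
    IsNoetherian.injective_of_surjective_endomorphism u husurj
  let eu : (ι → R) ≃ₗ[R] (ι → R) := LinearEquiv.ofBijective u ⟨huinj, husurj⟩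
  have hker : LinearMap.ker φ = Submodule.comap u (LinearMap.ker ψ) := by
    rw [← hcomp, LinearMap.ker_comp]
  rw [hker]
  intro x hx
  have hx' : u x ∈ (maximalIdeal R) ^ s • (⊤ : Submodule R (ι → R)) := hs hx
  have : x = eu.symm (u x) := by
    apply eu.injective
    simp [eu, LinearEquiv.ofBijective]
  rw [this]
  have : eu.symm (u x) ∈ Submodule.map (eu.symm : (ι → R) →ₗ[R] (ι → R))
      ((maximalIdeal R) ^ s • ⊤) := Submodule.mem_map_of_mem hx'
  rwa [Submodule.map_smul'', Submodule.map_top, LinearEquiv.range] at this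

end Aux4
section Aux5
open IsLocalRing Function
variable (R : Type*) [CommRing R] [IsLocalRing R]
variable (M : Type*) [AddCommGroup M] [Module R M] [Module.Finite R M]

/-- Every finite module over a local ring admits a minimal free presentation:
a surjection from a finite free module whose kernel lies in `𝔪 • ⊤`. -/
lemma exists_minimal_surjection :
    ∃ (n : ℕ) (φ : (Fin n → R) →ₗ[R] M),
      Surjective φ ∧ LinearMap.ker φ ≤ (maximalIdeal R) • ⊤ := by
  classical
  set I := maximalIdeal R with hI
  letI : Field (R ⧸ I) := Ideal.Quotient.field I
  haveI : IsScalarTower R (R ⧸ I) (M ⧸ (I • ⊤ : Submodule R M)) :=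
    (Module.isTorsionBySet_quotient_ideal_smul M I).isScalarTower (S := R)
  haveI : Module.Finite (R ⧸ I) (M ⧸ (I • ⊤ : Submodule R M)) :=
    Module.Finite.of_restrictScalars_finite R _ _
  set ιT := Module.Free.ChooseBasisIndex (R ⧸ I) (M ⧸ (I • ⊤ : Submodule R M)) with hιT
  set b0 : Module.Basis ιT (R ⧸ I) (M ⧸ (I • ⊤ : Submodule R M)) :=
    Module.Free.chooseBasis _ _ with hb0
  set n := Fintype.card ιT with hn
  set b : Module.Basis (Fin n) (R ⧸ I) (M ⧸ (I • ⊤ : Submodule R M)) :=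
    b0.reindex (Fintype.equivFin ιT) with hb
  choose g hg using fun i : Fin n =>
    Submodule.Quotient.mk_surjective (I • ⊤ : Submodule R M) (b i)
  set φ : (Fin n → R) →ₗ[R] M :=
    { toFun := fun v => ∑ i, v i • g i
      map_add' := fun x y => by
        simp only [Pi.add_apply, add_smul, Finset.sum_add_distrib]
      map_smul' := fun r x => by
        simp only [Pi.smul_apply, smul_eq_mul, RingHom.id_apply, Finset.smul_sum, smul_smul] }
    with hφ
  have hφ_apply : ∀ v, φ v = ∑ i, v i • g i := fun _ => rfl
  have hmkφ : ∀ v : Fin n → R,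
      (I • ⊤ : Submodule R M).mkQ (φ v) = ∑ i, Ideal.Quotient.mk I (v i) • b i := by
    intro v
    rw [hφ_apply, map_sum]
    refine Finset.sum_congr rfl fun i _ => ?_
    rw [Submodule.mkQ_apply, ← hg i, Module.Quotient.mk_smul_mk]
  have hφsurj : Surjective φ := by
    rw [← LinearMap.range_eq_top, ← top_le_iff]
    refine Submodule.le_of_le_smul_of_le_jacobson_bot (I := I)
      (Module.Finite.fg_top (R := R))
      (le_of_eq (IsLocalRing.jacobson_eq_maximalIdeal ⊥ bot_ne_top).symm) ?_
    intro x _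
    obtain ⟨w, hw⟩ : ∃ w : Fin n → R,
        (I • ⊤ : Submodule R M).mkQ (φ w) = (I • ⊤ : Submodule R M).mkQ x := by
      choose w hw using fun i : Fin n =>
        Ideal.Quotient.mk_surjective (I := I)
          (b.repr ((I • ⊤ : Submodule R M).mkQ x) i)
      refine ⟨w, ?_⟩
      rw [hmkφ, Finset.sum_congr rfl fun i _ => by rw [hw i]]
      exact b.sum_repr _
    have hker : x - φ w ∈ (I • ⊤ : Submodule R M) := by
      rw [← Submodule.Quotient.eq]
      exact hw.symm
    have hx : x = φ w + (x - φ w) := by abel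
    rw [hx]
    exact Submodule.add_mem_sup (LinearMap.mem_range_self φ w) hker
  refine ⟨n, φ, hφsurj, ?_⟩
  intro v hv
  have h0 : ∑ i, Ideal.Quotient.mk I (v i) • b i = 0 := by
    rw [← hmkφ, LinearMap.mem_ker.mp hv, map_zero]
  have hcoeff : ∀ i, Ideal.Quotient.mk I (v i) = 0 :=
    Fintype.linearIndependent_iff.mp b.linearIndependent _ h0
  exact mem_ideal_smul_top_pi_iff.mpr fun i =>
    Ideal.Quotient.eq_zero_iff_mem.mp (hcoeff i)

end Aux5
/-- A finitely generated module over a Noetherian local domain of prime characteristic `p`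
that is isomorphic to its pull-back along the `e`-th iterate of the Frobenius (for some
`e ≥ 1`) is free (final remark of the paper). -/
theorem frobenius_periodic_module_is_free (R : Type*) [CommRing R] [IsDomain R]
    [IsNoetherianRing R] [IsLocalRing R] (p : ℕ) [Fact p.Prime] [CharP R p]
    (e : ℕ) (he : 1 ≤ e)
    (M : Type*) [AddCommGroup M] [Module R M] [Module.Finite R M]
    (h : Nonempty (M ≃ₗ[R] FrobPull R (iterateFrobenius R p e) M)) :
    Module.Free R M := by
  classical
  obtain ⟨h⟩ := h
  set f := iterateFrobenius R p e with hf
  set I := IsLocalRing.maximalIdeal R with hI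
  set q := p ^ e with hq
  have hq2 : 2 ≤ q := le_trans (Fact.out (p := p.Prime)).two_le
    (Nat.le_self_pow (by omega) p)
  have hfI : ∀ (s : ℕ) (r : R), r ∈ I ^ s → f r ∈ I ^ (s * q) := by
    intro s r hr
    have h1 : f r = r ^ q := by rw [hf, _root_.iterateFrobenius_def, hq]
    have h2 : r ^ q ∈ (I ^ s) ^ q := Ideal.pow_mem_pow hr q
    rwa [← pow_mul, h1] at *
  obtain ⟨n, φ, hφs, hφk⟩ := exists_minimal_surjection R M
  have main : ∀ s : ℕ, ∃ ψ : (Fin n → R) →ₗ[R] M, Function.Surjective ψ ∧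
      LinearMap.ker ψ ≤ I ^ (s + 1) • ⊤ := by
    intro s
    induction s with
    | zero => exact ⟨φ, hφs, by rwa [pow_one]⟩
    | succ s ih =>
      obtain ⟨ψ, hψs, hψk⟩ := ih
      set ψ' : (Fin n → R) →ₗ[R] M :=
        (h.symm.toLinearMap ∘ₗ FrobPull.map f ψ) ∘ₗ FrobPull.ofPi f with hψ'
      have hψ's : Function.Surjective ψ' := by
        rw [hψ']
        simp only [LinearMap.coe_comp, LinearEquiv.coe_coe]
        exact h.symm.surjective.comp
          ((FrobPull.map_surjective f hψs).comp (FrobPull.ofPi_surjective f))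
      refine ⟨ψ', hψ's, ?_⟩
      intro w hw
      have h1 : FrobPull.map f ψ (FrobPull.ofPi f w) = 0 := by
        have := LinearMap.mem_ker.mp hw
        rw [hψ'] at this
        simp only [LinearMap.coe_comp, Function.comp_apply, LinearEquiv.coe_coe] at this
        exact (LinearEquiv.map_eq_zero_iff h.symm).mp this
      have h2 : LinearMap.lTensor (FrobAlg R f) ψ
          ((FrobPull.ofPi f w : FrobPull R f (Fin n → R)) :
            TensorProduct R (FrobAlg R f) (Fin n → R)) = 0 := by
        rw [← FrobPull.map_apply]; exact h1
      have hex := lTensor_exact (FrobAlg R f)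
        (LinearMap.exact_subtype_ker_map ψ) hψs
      obtain ⟨y, hy⟩ := (hex _).mp h2
      have hK : ∀ v ∈ LinearMap.ker ψ, ∀ i, f (v i) ∈ I ^ ((s + 1) * q) := by
        intro v hv i
        exact hfI (s + 1) _ (mem_ideal_smul_top_pi_iff.mp (hψk hv) i)
      have hwmem : ∀ i, w i ∈ I ^ ((s + 1) * q) := by
        intro i
        have := FrobPull.coordAdd_mem_of_range f hK y i
        rw [hy] at this
        rwa [FrobPull.coordAdd_ofPi] at this
      have hle : I ^ ((s + 1) * q) ≤ I ^ (s + 1 + 1) := by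
        refine Ideal.pow_le_pow_right ?_
        calc s + 1 + 1 ≤ (s + 1) * 2 := by omega
          _ ≤ (s + 1) * q := Nat.mul_le_mul_left _ hq2
      exact Submodule.smul_mono_left hle
        (mem_ideal_smul_top_pi_iff.mpr hwmem)
  have hφall : ∀ s : ℕ, LinearMap.ker φ ≤ I ^ s • ⊤ := by
    intro s
    cases s with
    | zero =>
      rw [pow_zero, Ideal.one_eq_top, Submodule.top_smul]
      exact le_top
    | succ s =>
      obtain ⟨ψ, h1, h2⟩ := main s
      have hk1 : LinearMap.ker ψ ≤ I • ⊤ :=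
        le_trans h2 (Submodule.smul_mono_left (Ideal.pow_le_self (by omega)))
      exact ker_le_of_ker_le hφs h1 hk1 (s + 1) h2
  have hbot : LinearMap.ker φ ≤ ⊥ := by
    have hne : I ≠ ⊤ := (IsLocalRing.maximalIdeal.isMaximal R).ne_top
    have := Ideal.iInf_pow_smul_eq_bot_of_isLocalRing
      (I := I) (M := Fin n → R) hne
    rw [← this]
    exact le_iInf fun s => hφall s
  have hinj : Function.Injective φ :=
    LinearMap.ker_eq_bot.mp (le_bot_iff.mp hbot)
  exact Module.Free.of_equiv (LinearEquiv.ofBijective φ ⟨hinj, hφs⟩)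
end
end

section
/- Let d ≥ 2 be an integer, let p be a prime number with p ≡ −1 (mod 2d), let K be a field of characteristic p, and let I = (X^d + Y^d − Z^d) ⊆ K[X,Y,Z]. Then there exist homogeneous polynomials F, G, H ∈ K[X,Y,Z], each of degree (p+1)/2, such that F·X^p + G·Y^p + H·Z^p ∈ I and such that not all of F, G, H lie in I. -/
open MvPolynomial

private lemma vec_eq_zero_of_sum_smul {K : Type*} [Field K] {σ : Type*} [DecidableEq σ]
    {a b : σ} (hab : a ≠ b) {n : ℕ} {v : Fin n → K}
    (h : ∑ i, v i • (X a ^ (i : ℕ) * X b ^ (n - 1 - (i : ℕ)) : MvPolynomial σ K) = 0) :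
    v = 0 := by
  funext j
  have hc := congrArg
    (coeff (Finsupp.single a (j : ℕ) + Finsupp.single b (n - 1 - (j : ℕ)))) h
  rw [coeff_sum] at hc
  simp only [coeff_smul, X_pow_eq_monomial, monomial_mul, one_mul, coeff_monomial,
    coeff_zero] at hc
  rw [Finset.sum_eq_single j] at hc
  · simpa using hc
  · intro i _ hij
    have hne : Finsupp.single a (i : ℕ) + Finsupp.single b (n - 1 - (i : ℕ)) ≠
        Finsupp.single a (j : ℕ) + Finsupp.single b (n - 1 - (j : ℕ)) := by
      intro he
      apply hij
      have h2 := congrArg (fun f => f a) he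
      simp only [Finsupp.add_apply, Finsupp.single_apply, if_pos rfl, if_neg hab.symm,
        add_zero] at h2
      exact Fin.ext h2
    rw [if_neg hne, smul_zero]
  · intro hj; exact absurd (Finset.mem_univ j) hj

private lemma vec_eq_zero_of_not_mem_fermat {K : Type*} [Field K] {d : ℕ} (hd : 2 ≤ d)
    {n : ℕ} {v : Fin n → K}
    (h : (∑ i, v i • (X 0 ^ (i : ℕ) * X 1 ^ (n - 1 - (i : ℕ)) : MvPolynomial (Fin 3) K)) ∈
      Ideal.span {(X 0 ^ d + X 1 ^ d - X 2 ^ d : MvPolynomial (Fin 3) K)}) :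
    v = 0 := by
  classical
  obtain ⟨c, hc⟩ := Ideal.mem_span_singleton.mp h
  set θ : MvPolynomial (Fin 3) K →+* Polynomial (MvPolynomial (Fin 2) K) :=
    (MvPolynomial.finSuccEquiv K 2).toAlgHom.toRingHom.comp
      (MvPolynomial.rename (⇑(Equiv.swap (0 : Fin 3) 2))).toRingHom with hθ
  have hθx : ∀ x, θ x = MvPolynomial.finSuccEquiv K 2
      (MvPolynomial.rename (⇑(Equiv.swap (0 : Fin 3) 2)) x) := fun _ => rfl
  have h0 : θ (X 0) = Polynomial.C (X 1) := by
    rw [hθx, rename_X, Equiv.swap_apply_left, show (2 : Fin 3) = Fin.succ 1 from rfl,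
      finSuccEquiv_X_succ]
  have h1 : θ (X 1) = Polynomial.C (X 0) := by
    rw [hθx, rename_X, show (Equiv.swap (0 : Fin 3) 2) 1 = 1 from by decide,
      show (1 : Fin 3) = Fin.succ 0 from rfl, finSuccEquiv_X_succ]
  have h2 : θ (X 2) = Polynomial.X := by
    rw [hθx, rename_X, Equiv.swap_apply_right, finSuccEquiv_X_zero]
  have hCk : ∀ k : K, θ (C k) = Polynomial.C (C k) := by
    intro k
    rw [hθx, rename_C]
    simp [finSuccEquiv_apply]
  set A2 : MvPolynomial (Fin 2) K :=
    ∑ i, v i • (X 1 ^ (i : ℕ) * X 0 ^ (n - 1 - (i : ℕ))) with hA2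
  have hθA : θ (∑ i, v i • (X 0 ^ (i : ℕ) * X 1 ^ (n - 1 - (i : ℕ)) : MvPolynomial (Fin 3) K))
      = Polynomial.C A2 := by
    rw [hA2, map_sum, map_sum]
    refine Finset.sum_congr rfl fun i _ => ?_
    rw [smul_eq_C_mul, smul_eq_C_mul, map_mul, map_mul, map_pow, map_pow, h0, h1, hCk,
      map_mul, map_mul, map_pow, map_pow]
  have hθP : θ (X 0 ^ d + X 1 ^ d - X 2 ^ d) =
      Polynomial.C (X 1 ^ d + X 0 ^ d) - Polynomial.X ^ d := by
    rw [map_sub, map_add, map_pow, map_pow, map_pow, h0, h1, h2, map_add,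
      Polynomial.C_pow, Polynomial.C_pow]
  have hA2zero : A2 = 0 := by
    by_contra hne
    have hmain : Polynomial.C A2 =
        (Polynomial.C (X 1 ^ d + X 0 ^ d) - Polynomial.X ^ d) * θ c := by
      rw [← hθA, ← hθP, ← map_mul, ← hc]
    have hPne : (Polynomial.C (X 1 ^ d + X 0 ^ d) - Polynomial.X ^ d :
        Polynomial (MvPolynomial (Fin 2) K)) ≠ 0 := by
      intro h0'
      have : ((Polynomial.X : Polynomial (MvPolynomial (Fin 2) K)) ^ d -
          Polynomial.C (X 1 ^ d + X 0 ^ d)).natDegree = d := Polynomial.natDegree_X_pow_sub_C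
      rw [show (Polynomial.X : Polynomial (MvPolynomial (Fin 2) K)) ^ d -
          Polynomial.C (X 1 ^ d + X 0 ^ d) =
          -(Polynomial.C (X 1 ^ d + X 0 ^ d) - Polynomial.X ^ d) by ring, h0', neg_zero,
        Polynomial.natDegree_zero] at this
      omega
    have hcne : θ c ≠ 0 := by
      intro h0'
      rw [h0', mul_zero, map_eq_zero_iff _ Polynomial.C_injective] at hmain
      exact hne hmain
    have hdeg := Polynomial.natDegree_mul hPne hcne
    rw [← hmain, Polynomial.natDegree_C] at hdeg
    have hdP : (Polynomial.C (X 1 ^ d + X 0 ^ d) - Polynomial.X ^ d :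
        Polynomial (MvPolynomial (Fin 2) K)).natDegree = d := by
      rw [show (Polynomial.C (X 1 ^ d + X 0 ^ d) - Polynomial.X ^ d :
          Polynomial (MvPolynomial (Fin 2) K)) =
          -(Polynomial.X ^ d - Polynomial.C (X 1 ^ d + X 0 ^ d)) by ring,
        Polynomial.natDegree_neg, Polynomial.natDegree_X_pow_sub_C]
    omega
  exact vec_eq_zero_of_sum_smul (show (1 : Fin 2) ≠ 0 by decide) hA2zero

private lemma mon_homog {K : Type*} [Field K] (a b : Fin 3) {s t n : ℕ} (h : s + t = n) :
    (X a ^ s * X b ^ t : MvPolynomial (Fin 3) K).IsHomogeneous n := by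
  subst h
  exact (isHomogeneous_X_pow _ _).mul (isHomogeneous_X_pow _ _)

/-- Step 1 of the proof of the main theorem: in characteristic `p ≡ -1 (mod 2d)` there is a
non-trivial homogeneous syzygy of `(X^p, Y^p, Z^p)` of total degree `(3p+1)/2` on the Fermat
curve of degree `d`: homogeneous `F, G, H` of degree `(p+1)/2` with
`F·X^p + G·Y^p + H·Z^p ∈ (X^d + Y^d - Z^d)` and not all of `F, G, H` in the ideal. -/
theorem nontrivial_syzygy_in_initial_degree (K : Type*) [Field K] (d : ℕ) (hd : 2 ≤ d)
    (p : ℕ) (hp : p.Prime) (hpd : 2 * d ∣ p + 1) [CharP K p]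
    (I : Ideal (MvPolynomial (Fin 3) K))
    (hI : I = Ideal.span {X 0 ^ d + X 1 ^ d - X 2 ^ d}) :
    ∃ F G H : MvPolynomial (Fin 3) K,
      F.IsHomogeneous ((p + 1) / 2) ∧ G.IsHomogeneous ((p + 1) / 2) ∧
      H.IsHomogeneous ((p + 1) / 2) ∧
      F * X 0 ^ p + G * X 1 ^ p + H * X 2 ^ p ∈ I ∧
      ¬(F ∈ I ∧ G ∈ I ∧ H ∈ I) := by
  classical
  obtain ⟨e, he⟩ := hpd
  have hp2 := hp.two_le
  have he1 : 1 ≤ e := by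
    rcases Nat.eq_zero_or_pos e with h | h
    · subst h; simp at he
    · exact h
  have hde : d * (2 * e) = p + 1 := by rw [he]; ring
  have hde' : 2 * (d * e) = p + 1 := by rw [he]; ring
  have hdege : 2 ≤ d * e := by nlinarith
  set q : ℕ := (p + 1) / 2 with hq
  have hqde : q = d * e := by
    rw [hq, ← hde', Nat.mul_div_cancel_left _ (by norm_num : 0 < 2)]
  have hq2 : 2 * q = p + 1 := by rw [hqde, hde']
  have hqge : 2 ≤ q := hqde ▸ hdege
  -- the linear map
  set W : MvPolynomial (Fin 3) K := (X 0 ^ d + X 1 ^ d) ^ (2 * e) with hW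
  set m : (Fin (q + 1) ⊕ (Fin (q + 1) ⊕ Fin q)) → MvPolynomial (Fin 3) K :=
    Sum.elim
      (fun i => (X 0 ^ (i : ℕ) * X 1 ^ (q + 1 - 1 - (i : ℕ))) * X 0 ^ p)
      (Sum.elim
        (fun i => (X 0 ^ (i : ℕ) * X 1 ^ (q + 1 - 1 - (i : ℕ))) * X 1 ^ p)
        (fun i => (X 0 ^ (i : ℕ) * X 1 ^ (q - 1 - (i : ℕ))) * W)) with hm
  set φ : ((Fin (q + 1) ⊕ (Fin (q + 1) ⊕ Fin q)) → K) →ₗ[K] MvPolynomial (Fin 3) K :=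
    { toFun := fun x => ∑ i, x i • m i
      map_add' := by intro x y; simp [add_smul, Finset.sum_add_distrib]
      map_smul' := by intro c x; simp [Finset.smul_sum, smul_smul] } with hφ
  set g : Fin (3 * q) → MvPolynomial (Fin 3) K :=
    fun a => X 0 ^ (a : ℕ) * X 1 ^ (p + q - (a : ℕ)) with hg
  have hgmem : ∀ a b : ℕ, a + b = p + q →
      (X 0 ^ a * X 1 ^ b : MvPolynomial (Fin 3) K) ∈ Submodule.span K (Set.range g) := by
    intro a b hab
    refine Submodule.subset_span ⟨⟨a, by omega⟩, ?_⟩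
    simp only [hg]
    rw [show p + q - a = b by omega]
  have hrange : ∀ x, φ x ∈ Submodule.span K (Set.range g) := by
    intro x
    show (∑ i, x i • m i) ∈ _
    refine Submodule.sum_mem _ fun i _ => Submodule.smul_mem _ _ ?_
    rcases i with i | i | i
    · have : m (Sum.inl i) = X 0 ^ (p + (i : ℕ)) * X 1 ^ (q + 1 - 1 - (i : ℕ)) := by
        simp only [hm, Sum.elim_inl]
        rw [pow_add]; ring
      rw [this]
      exact hgmem _ _ (by have := i.isLt; omega)
    · have : m (Sum.inr (Sum.inl i)) =
          X 0 ^ (i : ℕ) * X 1 ^ (q + 1 - 1 - (i : ℕ) + p) := by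
        simp only [hm, Sum.elim_inr, Sum.elim_inl]
        rw [pow_add]; ring
      rw [this]
      exact hgmem _ _ (by have := i.isLt; omega)
    · simp only [hm, Sum.elim_inr, hW]
      rw [add_pow, Finset.mul_sum]
      refine Submodule.sum_mem _ fun k hk => ?_
      have hk2e : k ≤ 2 * e := by
        simp only [Finset.mem_range] at hk; omega
      have hsum : d * (2 * e - k) + d * k = p + 1 := by
        rw [← Nat.mul_add, Nat.sub_add_cancel hk2e, hde]
      have hdk : d * k ≤ p + 1 := by omega
      have hterm : (X 0 ^ (i : ℕ) * X 1 ^ (q - 1 - (i : ℕ))) *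
            ((X 0 ^ d) ^ k * (X 1 ^ d) ^ (2 * e - k) * ((2 * e).choose k : MvPolynomial (Fin 3) K))
          = (((2 * e).choose k : K)) •
            (X 0 ^ ((i : ℕ) + d * k) * X 1 ^ ((q - 1 - (i : ℕ)) + d * (2 * e - k))) := by
        rw [smul_eq_C_mul, C_eq_coe_nat, ← pow_mul, ← pow_mul, pow_add, pow_add]
        ring
      rw [hterm]
      refine Submodule.smul_mem _ _ (hgmem _ _ ?_)
      have := i.isLt
      omega
  -- nontrivial kernel
  have hker : ∃ x, x ≠ 0 ∧ φ x = 0 := by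
    by_contra hcon
    push_neg at hcon
    have hinj : Function.Injective φ := by
      rw [← LinearMap.ker_eq_bot, Submodule.eq_bot_iff]
      intro x hx
      by_contra hx0
      exact hcon x hx0 hx
    have h1 : Module.finrank K ((Fin (q + 1) ⊕ (Fin (q + 1) ⊕ Fin q)) → K) = 3 * q + 2 := by
      rw [Module.finrank_fintype_fun_eq_card]
      simp only [Fintype.card_sum, Fintype.card_fin]
      omega
    have hfin : FiniteDimensional K (Submodule.span K (Set.range g)) :=
      FiniteDimensional.span_of_finite K (Set.finite_range g)
    have hle : LinearMap.range φ ≤ Submodule.span K (Set.range g) := by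
      rintro _ ⟨x, rfl⟩; exact hrange x
    have h2 := Submodule.finrank_mono hle
    have h3 : Module.finrank K (Submodule.span K (Set.range g)) ≤ 3 * q := by
      have h4 := finrank_range_le_card (R := K) g
      rw [Set.finrank] at h4
      simpa using h4
    have h5 := LinearMap.finrank_range_of_inj hinj
    omega
  obtain ⟨x, hx0, hxφ⟩ := hker
  set v : Fin (q + 1) → K := fun i => x (Sum.inl i) with hv
  set w : Fin (q + 1) → K := fun i => x (Sum.inr (Sum.inl i)) with hw
  set u : Fin q → K := fun i => x (Sum.inr (Sum.inr i)) with hu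
  set A : MvPolynomial (Fin 3) K :=
    ∑ i, v i • (X 0 ^ (i : ℕ) * X 1 ^ (q + 1 - 1 - (i : ℕ))) with hA
  set B : MvPolynomial (Fin 3) K :=
    ∑ i, w i • (X 0 ^ (i : ℕ) * X 1 ^ (q + 1 - 1 - (i : ℕ))) with hB
  set Cp : MvPolynomial (Fin 3) K :=
    ∑ i, u i • (X 0 ^ (i : ℕ) * X 1 ^ (q - 1 - (i : ℕ))) with hCp
  have hsplit : A * X 0 ^ p + B * X 1 ^ p + Cp * W = 0 := by
    rw [← hxφ, hφ]
    show _ = ∑ i, x i • m i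
    rw [Fintype.sum_sum_type, Fintype.sum_sum_type, hA, hB, hCp,
      Finset.sum_mul, Finset.sum_mul, Finset.sum_mul]
    simp only [smul_mul_assoc, hm, Sum.elim_inl, Sum.elim_inr, hv, hw, hu]
    ring
  have hCph : Cp.IsHomogeneous (q - 1) := by
    rw [hCp, ← mem_homogeneousSubmodule]
    refine Submodule.sum_mem _ fun i _ => Submodule.smul_mem _ _ ?_
    rw [mem_homogeneousSubmodule]
    exact mon_homog 0 1 (by have := i.isLt; omega)
  refine ⟨A, B, X 2 * Cp, ?_, ?_, ?_, ?_, ?_⟩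
  · rw [hA, ← mem_homogeneousSubmodule]
    refine Submodule.sum_mem _ fun i _ => Submodule.smul_mem _ _ ?_
    rw [mem_homogeneousSubmodule]
    exact mon_homog 0 1 (by have := i.isLt; omega)
  · rw [hB, ← mem_homogeneousSubmodule]
    refine Submodule.sum_mem _ fun i _ => Submodule.smul_mem _ _ ?_
    rw [mem_homogeneousSubmodule]
    exact mon_homog 0 1 (by have := i.isLt; omega)
  · have h3 := (isHomogeneous_X K (2 : Fin 3)).mul hCph
    rw [show 1 + (q - 1) = q by omega] at h3
    exact h3
  · have hX2 : (X 2 : MvPolynomial (Fin 3) K) * X 2 ^ p = (X 2 ^ d) ^ (2 * e) := by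
      rw [← pow_succ', ← pow_mul, hde]
    have key : A * X 0 ^ p + B * X 1 ^ p + (X 2 * Cp) * X 2 ^ p
        = Cp * ((X 2 ^ d) ^ (2 * e) - W) := by
      have h4 : (X 2 * Cp) * X 2 ^ p = Cp * ((X 2 ^ d) ^ (2 * e)) := by
        rw [mul_comm (X 2 : MvPolynomial (Fin 3) K) Cp, mul_assoc, hX2]
      rw [h4]
      linear_combination hsplit
    rw [key, hI]
    refine Ideal.mul_mem_left _ _ (Ideal.mem_span_singleton.mpr ?_)
    rw [hW, show (X 0 ^ d + X 1 ^ d - X 2 ^ d : MvPolynomial (Fin 3) K)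
        = -(X 2 ^ d - (X 0 ^ d + X 1 ^ d)) by ring, neg_dvd]
    exact sub_dvd_pow_sub_pow _ _ _
  · rintro ⟨hF, hG, _⟩
    rw [hI] at hF hG
    rw [hA] at hF
    rw [hB] at hG
    have hv0 : v = 0 := vec_eq_zero_of_not_mem_fermat hd hF
    have hw0 : w = 0 := vec_eq_zero_of_not_mem_fermat hd hG
    have hA0 : A = 0 := by rw [hA, hv0]; simp
    have hB0 : B = 0 := by rw [hB, hw0]; simp
    have hCpW : Cp * W = 0 := by
      rw [hA0, hB0] at hsplit
      simpa using hsplit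
    have hbase : (X 0 ^ d + X 1 ^ d : MvPolynomial (Fin 3) K) ≠ 0 := by
      intro hz
      have hne2 : (Finsupp.single (1 : Fin 3) d) ≠ Finsupp.single (0 : Fin 3) d := by
        intro hh
        have h5 := congrArg (fun f => f 0) hh
        simp only [Finsupp.single_apply, if_neg (show (1 : Fin 3) ≠ 0 by decide),
          eq_self_iff_true, if_true] at h5
        omega
      have h6 := congrArg (coeff (Finsupp.single (0 : Fin 3) d)) hz
      rw [coeff_add, X_pow_eq_monomial, X_pow_eq_monomial, coeff_monomial, coeff_monomial,
        if_pos rfl, if_neg hne2, coeff_zero, add_zero] at h6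
      exact one_ne_zero h6
    have hWne : W ≠ 0 := by rw [hW]; exact pow_ne_zero _ hbase
    have hCpz : Cp = 0 := by
      rcases mul_eq_zero.mp hCpW with h7 | h7
      · exact h7
      · exact absurd h7 hWne
    rw [hCp] at hCpz
    have hu0 : u = 0 := vec_eq_zero_of_sum_smul (show (0 : Fin 3) ≠ 1 by decide) hCpz
    apply hx0
    funext i
    rcases i with i | i | i
    · exact congrFun hv0 i
    · exact congrFun hw0 i
    · exact congrFun hu0 i
end
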